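/- arXiv:1011.2958 — 5 statements merged into one kernel-verified Lean document; each statement's English description precedes it below -/
import Mathlib

section
/- Let τ be an F°-stopping time taking finitely many values, let P, P₁, P₂ be probability measures on (Ω,F°_T) with P₁ = P₂ = P on F°_τ, let Λ ∈ F°_τ, and let P̄ be the pasting of (P₁,P₂) over (Λ,τ) under P. Then: (a) P̄ = P on F°_τ; (b) for every F°_T-measurable X : Ω → ℝ that is integrable under P₁ and under P₂, X is integrable under P̄ and E^{P̄}[X|F°_τ] = 1_Λ·E^{P₁}[X|F°_τ] + 1_{Λᶜ}·E^{P₂}[X|F°_τ] holds P-a.s.; in particular, if Λ = {E^{P₁}[X|F°_τ] > E^{P₂}[X|F°_τ]}, then E^{P̄}[X|F°_τ] = max(E^{P₁}[X|F°_τ], E^{P₂}[X|F°_τ]) P-a.s. -/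
open MeasureTheory Set Filter

noncomputable section

/-- The canonical path space: continuous paths in `ℝ^d` starting at `0`
(paths indexed by `ℝ`; only the restriction to `[0,T]` is ever used). -/
def PathSpace (d : ℕ) : Type :=
  {ω : C(ℝ, EuclideanSpace ℝ (Fin d)) // ω 0 = 0}

/-- The raw σ-algebra `F°_t = σ(B_s ; 0 ≤ s ≤ t)` generated by the canonical process. -/
def rawSA (d : ℕ) (t : ℝ) : MeasurableSpace (PathSpace d) :=
  ⨆ s ∈ Set.Icc (0 : ℝ) t, MeasurableSpace.comap (fun ω : PathSpace d => ω.1 s) inferInstance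

lemma rawSA_mono {d : ℕ} : Monotone (rawSA d) := by
  intro s t hst
  refine iSup₂_le fun u hu => ?_
  exact le_iSup₂_of_le u ⟨hu.1, hu.2.trans hst⟩ le_rfl

/-- The raw filtration `F°`, as a filtration indexed by `ℝ` (constant after time `T`),
with ambient σ-algebra `F°_T`. -/
def rawFilt (T : ℝ) (d : ℕ) : Filtration ℝ (rawSA d T) where
  seq t := rawSA d (min t T)
  mono' := fun _ _ hst => rawSA_mono (min_le_min hst le_rfl)
  le' := fun t => rawSA_mono (min_le_right t T)

/-- A bounded function. -/
def BddFun {α : Type*} (f : α → ℝ) : Prop := ∃ C : ℝ, ∀ x, |f x| ≤ C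

/-- `Y` is a `P`-essential supremum of the family `F` of random variables. -/
def IsEssSupOf {α : Type*} {m0 : MeasurableSpace α} (P : @Measure α m0) (F : Set (α → ℝ))
    (Y : α → ℝ) : Prop :=
  (∀ f ∈ F, f ≤ᵐ[P] Y) ∧ ∀ Z : α → ℝ, (∀ f ∈ F, f ≤ᵐ[P] Z) → Y ≤ᵐ[P] Z

/-- Two measures agree on the σ-algebra `G`. -/
def EqOnSA {α : Type*} {m0 : MeasurableSpace α} (G : MeasurableSpace α)
    (P Q : @Measure α m0) : Prop :=
  ∀ A : Set α, MeasurableSet[G] A → P A = Q A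

/-- `𝔓(G, P) = {P' ∈ 𝔓 : P' = P on G}`. -/
def MSet {α : Type*} {m0 : MeasurableSpace α} (𝔓 : Set (@Measure α m0))
    (G : MeasurableSpace α) (P : @Measure α m0) : Set (@Measure α m0) :=
  {Q ∈ 𝔓 | EqOnSA G Q P}

/-- The family `{E^{P'}[X | G] : P' ∈ 𝔓(G, P)}` of conditional expectations. -/
def condExpFam {α : Type*} {m0 : MeasurableSpace α} (𝔓 : Set (@Measure α m0))
    (G : MeasurableSpace α) (P : @Measure α m0) (X : α → ℝ) : Set (α → ℝ) :=
  {g | ∃ Q ∈ MSet 𝔓 G P, g = condExp G Q X}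

/-- `X ∈ L¹_𝔓` : `mT`-measurable with `sup_{P ∈ 𝔓} E^P[|X|] < ∞`. -/
def MemL1 {α : Type*} {m0 : MeasurableSpace α} (mT : MeasurableSpace α)
    (𝔓 : Set (@Measure α m0)) (X : α → ℝ) : Prop :=
  Measurable[mT] X ∧ (∀ P ∈ 𝔓, Integrable X P) ∧ ∃ M : ℝ, ∀ P ∈ 𝔓, ∫ ω, |X ω| ∂P ≤ M

/-- `Pb` is the pasting of `(P₁, P₂)` over `(Λ, G)` under `P`, characterized through
integrals of bounded measurable functions. -/
def IsPastingOf {α : Type*} {m0 : MeasurableSpace α} (mT : MeasurableSpace α)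
    (G : MeasurableSpace α) (P P₁ P₂ Pb : @Measure α m0) (Λ : Set α) : Prop :=
  ∀ h : α → ℝ, Measurable[mT] h → BddFun h →
    ∫ x, h x ∂Pb
      = ∫ x, (Λ.indicator (condExp G P₁ h) x + Λᶜ.indicator (condExp G P₂ h) x) ∂P

/-- `𝔓` is stable under `F°`-pasting (along finite-valued `F°`-stopping times). -/
def StableUnderPasting (T : ℝ) (d : ℕ)
    (𝔓 : Set (@Measure (PathSpace d) (rawSA d T))) : Prop :=
  ∀ P ∈ 𝔓, ∀ τ : PathSpace d → ℝ, ∀ hτ : IsStoppingTime (rawFilt T d) (fun ω => (τ ω : WithTop ℝ)),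
    (Set.range τ).Finite → (∀ ω, τ ω ∈ Set.Icc (0 : ℝ) T) →
    ∀ Λ : Set (PathSpace d), MeasurableSet[hτ.measurableSpace] Λ →
    ∀ P₁ ∈ MSet 𝔓 hτ.measurableSpace P, ∀ P₂ ∈ MSet 𝔓 hτ.measurableSpace P,
    ∀ Pb : @Measure (PathSpace d) (rawSA d T),
      IsPastingOf (rawSA d T) hτ.measurableSpace P P₁ P₂ Pb Λ → Pb ∈ 𝔓

end

section Aux
variable {α : Type*} {m0 : MeasurableSpace α} {G : MeasurableSpace α}
  {P Q : @MeasureTheory.Measure α m0}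

lemma trim_eq_of_eqOnSA (hG : G ≤ m0) (h : EqOnSA G P Q) : P.trim hG = Q.trim hG :=
  @Measure.ext _ G _ _ (fun s hs => by
    rw [trim_measurableSet_eq hG hs, trim_measurableSet_eq hG hs]; exact h s hs)

lemma integral_eq_of_eqOnSA (hG : G ≤ m0) (h : EqOnSA G P Q) {f : α → ℝ}
    (hf : StronglyMeasurable[G] f) : ∫ x, f x ∂P = ∫ x, f x ∂Q := by
  rw [integral_trim hG hf, integral_trim hG hf, trim_eq_of_eqOnSA hG h]

lemma integrable_of_eqOnSA (hG : G ≤ m0) (h : EqOnSA G P Q) {f : α → ℝ}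
    (hf : StronglyMeasurable[G] f) (hfi : Integrable f P) : Integrable f Q := by
  have h2 := hfi.trim hG hf
  rw [trim_eq_of_eqOnSA hG h] at h2
  exact integrable_of_integrable_trim hG h2

lemma ae_eq_of_eqOnSA (hG : G ≤ m0) (h : EqOnSA G P Q) {f g : α → ℝ}
    (hf : StronglyMeasurable[G] f) (hg : StronglyMeasurable[G] g) (hfg : f =ᵐ[P] g) :
    f =ᵐ[Q] g := by
  have hmeas : MeasurableSet[G] {x | f x = g x} := hf.measurableSet_eq_fun hg
  rw [Filter.EventuallyEq, ae_iff] at hfg ⊢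
  have hset : {a | ¬ f a = g a} = {x | f x = g x}ᶜ := rfl
  rw [hset] at hfg ⊢
  rw [← h _ hmeas.compl]
  exact hfg

lemma ae_le_of_eqOnSA (hG : G ≤ m0) (h : EqOnSA G P Q) {f g : α → ℝ}
    (hf : Measurable[G] f) (hg : Measurable[G] g) (hfg : f ≤ᵐ[P] g) :
    f ≤ᵐ[Q] g := by
  have hmeas : MeasurableSet[G] {x | g x < f x} := measurableSet_lt hg hf
  rw [Filter.EventuallyLE, ae_iff] at hfg ⊢
  simp only [not_le] at hfg ⊢
  rw [← h _ hmeas]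
  exact hfg

end Aux

def trunc (n : ℕ) (x : ℝ) : ℝ := max (min x n) (-(n : ℝ))

lemma abs_trunc_le_abs (n : ℕ) (x : ℝ) : |trunc n x| ≤ |x| := by
  rw [abs_le]
  constructor
  · exact le_max_of_le_left
      (le_min (neg_abs_le x) ((neg_nonpos.mpr (abs_nonneg x)).trans (Nat.cast_nonneg n)))
  · exact max_le ((min_le_left _ _).trans (le_abs_self x))
      ((neg_nonpos.mpr (Nat.cast_nonneg n)).trans (abs_nonneg x))

lemma abs_trunc_le (n : ℕ) (x : ℝ) : |trunc n x| ≤ (n : ℝ) := by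
  rw [abs_le]
  exact ⟨le_max_right _ _, max_le ((min_le_right _ _)) ((neg_nonpos.mpr (Nat.cast_nonneg n)).trans (Nat.cast_nonneg n))⟩

lemma tendsto_trunc (x : ℝ) : Tendsto (fun n : ℕ => trunc n x) atTop (nhds x) := by
  have h : ∀ᶠ n : ℕ in atTop, trunc n x = x := by
    filter_upwards [eventually_ge_atTop ⌈|x|⌉₊] with n hn
    have hn' : |x| ≤ (n : ℝ) := (Nat.le_ceil _).trans (by exact_mod_cast hn)
    rw [abs_le] at hn'
    rw [trunc, min_eq_left hn'.2, max_eq_left (by linarith [hn'.1])]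
  exact tendsto_const_nhds.congr' (h.mono fun n hn => hn.symm)

lemma measurable_trunc_comp {α : Type*} {m : MeasurableSpace α} {f : α → ℝ}
    (hf : Measurable f) (n : ℕ) : Measurable (fun x => trunc n (f x)) :=
  (hf.min measurable_const).max measurable_const


section Wrap
variable {α : Type*} {m0 : MeasurableSpace α} {μ : @MeasureTheory.Measure α m0}
  {f : α → ℝ} {s : Set α}

lemma wInd_integrable (h : Integrable f μ) (hs : MeasurableSet[m0] s) :
    Integrable (s.indicator f) μ := h.indicator hs

lemma wInd_measurable (hf : Measurable[m0] f) (hs : MeasurableSet[m0] s) :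
    Measurable[m0] (s.indicator f) := hf.indicator hs

lemma wIntegral_indicator (hs : MeasurableSet[m0] s) :
    ∫ x, s.indicator f x ∂μ = ∫ x in s, f x ∂μ := integral_indicator hs

lemma wSetIntegral_indicator {t : Set α} (ht : MeasurableSet[m0] t) :
    ∫ x in s, t.indicator f x ∂μ = ∫ x in s ∩ t, f x ∂μ := setIntegral_indicator ht

lemma wIntegral_indicator_one (hs : MeasurableSet[m0] s) :
    ∫ x, s.indicator (1 : α → ℝ) x ∂μ = (μ s).toReal := integral_indicator_one hs

lemma wIntegrableOn (h : Integrable f μ) (s : Set α) : IntegrableOn f s μ := h.integrableOn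

lemma wRestrict (h : Integrable f μ) (s : Set α) : Integrable f (μ.restrict s) := h.restrict

lemma wIntegrable_const [IsFiniteMeasure μ] (c : ℝ) : Integrable (fun _ => c) μ :=
  integrable_const c

lemma wInd_integrable_one [IsFiniteMeasure μ] (hs : MeasurableSet[m0] s) :
    Integrable (s.indicator (1 : α → ℝ)) μ := (integrable_const (1:ℝ)).indicator hs
end Wrap

theorem pasting_main {α : Type*} {m0 : MeasurableSpace α} {G : MeasurableSpace α} (hG : G ≤ m0)
    (P P₁ P₂ Pb : @MeasureTheory.Measure α m0)
    (hP : IsProbabilityMeasure P) (hP₁ : IsProbabilityMeasure P₁)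
    (hP₂ : IsProbabilityMeasure P₂) (hPb : IsProbabilityMeasure Pb)
    (h₁ : EqOnSA G P₁ P) (h₂ : EqOnSA G P₂ P)
    (Λ : Set α) (hΛ : MeasurableSet[G] Λ)
    (hpaste : IsPastingOf m0 G P P₁ P₂ Pb Λ) :
    EqOnSA G Pb P ∧
    (∀ X : α → ℝ, Measurable[m0] X → Integrable X P₁ → Integrable X P₂ →
      Integrable X Pb ∧
      (condExp G Pb X =ᵐ[P] fun ω => Λ.indicator (condExp G P₁ X) ω
          + Λᶜ.indicator (condExp G P₂ X) ω) ∧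
      (Λ = {ω | condExp G P₂ X ω < condExp G P₁ X ω} →
        condExp G Pb X =ᵐ[P] fun ω => max (condExp G P₁ X ω) (condExp G P₂ X ω))) := by
  haveI := hP; haveI := hP₁; haveI := hP₂; haveI := hPb
  have hΛm : MeasurableSet[m0] Λ := hG _ hΛ
  -- part (a)
  have ha : EqOnSA G Pb P := by
    intro A hA
    have hAm : MeasurableSet[m0] A := hG _ hA
    have hSM : StronglyMeasurable[G] (A.indicator (1 : α → ℝ)) :=
      stronglyMeasurable_const.indicator hA
    have hbdd : BddFun (A.indicator (1 : α → ℝ)) := ⟨1, fun x => by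
      by_cases hx : x ∈ A <;>
        simp [Set.indicator_of_mem, Set.indicator_of_notMem, hx]⟩
    have hint₁ : Integrable (A.indicator (1 : α → ℝ)) P₁ := wInd_integrable_one hAm
    have hint₂ : Integrable (A.indicator (1 : α → ℝ)) P₂ := wInd_integrable_one hAm
    have hmeas : Measurable[m0] (A.indicator (1 : α → ℝ)) := wInd_measurable measurable_const hAm
    have key := hpaste (A.indicator (1 : α → ℝ)) hmeas hbdd
    rw [condExp_of_stronglyMeasurable hG hSM hint₁,
        condExp_of_stronglyMeasurable hG hSM hint₂] at key
    have hptw : ∀ x, Λ.indicator (A.indicator (1 : α → ℝ)) x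
        + Λᶜ.indicator (A.indicator (1 : α → ℝ)) x = A.indicator (1 : α → ℝ) x :=
      fun x => congrFun (Set.indicator_self_add_compl Λ (A.indicator (1 : α → ℝ))) x
    simp_rw [hptw] at key
    rw [wIntegral_indicator_one hAm, wIntegral_indicator_one hAm] at key
    exact (ENNReal.toReal_eq_toReal_iff' (measure_ne_top _ _) (measure_ne_top _ _)).mp key
  refine ⟨ha, ?_⟩
  -- measure domination : Pb ≤ P₁ + P₂
  have hle : Pb ≤ P₁ + P₂ := by
    rw [Measure.le_iff]
    intro A hAm
    have hbdd : BddFun (A.indicator (1 : α → ℝ)) := ⟨1, fun x => by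
      by_cases hx : x ∈ A <;>
        simp [Set.indicator_of_mem, Set.indicator_of_notMem, hx]⟩
    have hmeas : Measurable[m0] (A.indicator (1 : α → ℝ)) := wInd_measurable measurable_const hAm
    have key := hpaste (A.indicator (1 : α → ℝ)) hmeas hbdd
    have hc₁P : Integrable (condExp G P₁ (A.indicator (1 : α → ℝ))) P :=
      integrable_of_eqOnSA hG h₁ stronglyMeasurable_condExp integrable_condExp
    have hc₂P : Integrable (condExp G P₂ (A.indicator (1 : α → ℝ))) P :=
      integrable_of_eqOnSA hG h₂ stronglyMeasurable_condExp integrable_condExp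
    have hnn : ∀ x, 0 ≤ A.indicator (1 : α → ℝ) x := fun x =>
      Set.indicator_nonneg (fun _ _ => zero_le_one) x
    have hc₁0 : (fun _ => (0:ℝ)) ≤ᵐ[P] condExp G P₁ (A.indicator (1 : α → ℝ)) :=
      ae_le_of_eqOnSA hG h₁ measurable_const stronglyMeasurable_condExp.measurable
        (condExp_nonneg (ae_of_all _ hnn))
    have hc₂0 : (fun _ => (0:ℝ)) ≤ᵐ[P] condExp G P₂ (A.indicator (1 : α → ℝ)) :=
      ae_le_of_eqOnSA hG h₂ measurable_const stronglyMeasurable_condExp.measurable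
        (condExp_nonneg (ae_of_all _ hnn))
    have hb₁ : Λ.indicator (condExp G P₁ (A.indicator (1 : α → ℝ)))
        ≤ᵐ[P] condExp G P₁ (A.indicator (1 : α → ℝ)) := by
      filter_upwards [hc₁0] with x hx
      by_cases hxΛ : x ∈ Λ <;>
        simp_all [Set.indicator_of_mem, Set.indicator_of_notMem]
    have hb₂ : Λᶜ.indicator (condExp G P₂ (A.indicator (1 : α → ℝ)))
        ≤ᵐ[P] condExp G P₂ (A.indicator (1 : α → ℝ)) := by
      filter_upwards [hc₂0] with x hx
      by_cases hxΛ : x ∈ Λᶜ <;>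
        simp_all [Set.indicator_of_mem, Set.indicator_of_notMem]
    have hi₁ : Integrable (Λ.indicator (condExp G P₁ (A.indicator (1 : α → ℝ)))) P :=
      wInd_integrable hc₁P hΛm
    have hi₂ : Integrable (Λᶜ.indicator (condExp G P₂ (A.indicator (1 : α → ℝ)))) P :=
      wInd_integrable hc₂P hΛm.compl
    have hv₁ : ∫ x, condExp G P₁ (A.indicator (1 : α → ℝ)) x ∂P = (P₁ A).toReal := by
      rw [← integral_eq_of_eqOnSA hG h₁ stronglyMeasurable_condExp,
        integral_condExp hG]
      exact wIntegral_indicator_one hAm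
    have hv₂ : ∫ x, condExp G P₂ (A.indicator (1 : α → ℝ)) x ∂P = (P₂ A).toReal := by
      rw [← integral_eq_of_eqOnSA hG h₂ stronglyMeasurable_condExp,
        integral_condExp hG]
      exact wIntegral_indicator_one hAm
    have hPbA : (Pb A).toReal ≤ (P₁ A).toReal + (P₂ A).toReal := by
      rw [wIntegral_indicator_one hAm] at key
      rw [key, integral_add hi₁ hi₂]
      calc ∫ x, Λ.indicator (condExp G P₁ (A.indicator (1 : α → ℝ))) x ∂P
            + ∫ x, Λᶜ.indicator (condExp G P₂ (A.indicator (1 : α → ℝ))) x ∂P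
          ≤ ∫ x, condExp G P₁ (A.indicator (1 : α → ℝ)) x ∂P
            + ∫ x, condExp G P₂ (A.indicator (1 : α → ℝ)) x ∂P :=
          add_le_add (integral_mono_ae hi₁ hc₁P hb₁) (integral_mono_ae hi₂ hc₂P hb₂)
        _ = (P₁ A).toReal + (P₂ A).toReal := by rw [hv₁, hv₂]
    rw [Measure.add_apply,
      ← ENNReal.toReal_le_toReal (measure_ne_top _ _)
        (ENNReal.add_ne_top.mpr ⟨measure_ne_top _ _, measure_ne_top _ _⟩),
      ENNReal.toReal_add (measure_ne_top _ _) (measure_ne_top _ _)]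
    exact hPbA
  intro X hXm hX₁ hX₂
  have hXb : Integrable X Pb := (integrable_add_measure.mpr ⟨hX₁, hX₂⟩).mono_measure hle
  refine ⟨hXb, ?_⟩
  have hgSM : StronglyMeasurable[G] (fun ω => Λ.indicator (condExp G P₁ X) ω
      + Λᶜ.indicator (condExp G P₂ X) ω) :=
    (stronglyMeasurable_condExp.indicator hΛ).add (stronglyMeasurable_condExp.indicator hΛ.compl)
  have hE₁P : Integrable (condExp G P₁ X) P :=
    integrable_of_eqOnSA hG h₁ stronglyMeasurable_condExp integrable_condExp
  have hE₂P : Integrable (condExp G P₂ X) P :=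
    integrable_of_eqOnSA hG h₂ stronglyMeasurable_condExp integrable_condExp
  have hgP : Integrable (fun ω => Λ.indicator (condExp G P₁ X) ω
      + Λᶜ.indicator (condExp G P₂ X) ω) P :=
    (wInd_integrable hE₁P hΛm).add (wInd_integrable hE₂P hΛm.compl)
  have hgPb : Integrable (fun ω => Λ.indicator (condExp G P₁ X) ω
      + Λᶜ.indicator (condExp G P₂ X) ω) Pb :=
    integrable_of_eqOnSA hG (fun A hA => (ha A hA).symm) hgSM hgP
  -- the set-integral identity
  have hseteq : ∀ A : Set α, MeasurableSet[G] A →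
      ∫ x in A, (Λ.indicator (condExp G P₁ X) x + Λᶜ.indicator (condExp G P₂ X) x) ∂Pb
        = ∫ x in A, X x ∂Pb := by
    intro A hA
    have hAm : MeasurableSet[m0] A := hG _ hA
    have hΛA : MeasurableSet[G] (Λ ∩ A) := hΛ.inter hA
    have hΛcA : MeasurableSet[G] (Λᶜ ∩ A) := hΛ.compl.inter hA
    have hΛAm : MeasurableSet[m0] (Λ ∩ A) := hG _ hΛA
    have hΛcAm : MeasurableSet[m0] (Λᶜ ∩ A) := hG _ hΛcA
    have hFmeas : ∀ n : ℕ, Measurable[m0] (A.indicator (fun ω => trunc n (X ω))) :=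
      fun n => wInd_measurable (measurable_trunc_comp hXm n) hAm
    have hFabs : ∀ (n : ℕ) x, |A.indicator (fun ω => trunc n (X ω)) x| ≤ |X x| := by
      intro n x
      by_cases hx : x ∈ A
      · rw [Set.indicator_of_mem hx]; exact abs_trunc_le_abs n (X x)
      · rw [Set.indicator_of_notMem hx]; simp [abs_nonneg]
    have hFb : ∀ (n : ℕ) x, |A.indicator (fun ω => trunc n (X ω)) x| ≤ (n : ℝ) := by
      intro n x
      by_cases hx : x ∈ A
      · rw [Set.indicator_of_mem hx]; exact abs_trunc_le n (X x)
      · rw [Set.indicator_of_notMem hx]; simp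
    have hFint : ∀ (μ : @MeasureTheory.Measure α m0), IsProbabilityMeasure μ →
        ∀ n : ℕ, Integrable (A.indicator (fun ω => trunc n (X ω))) μ := by
      intro μ hμ n
      refine (integrable_const ((n:ℝ))).mono' (hFmeas n).aestronglyMeasurable
        (ae_of_all _ fun x => ?_)
      rw [Real.norm_eq_abs]
      exact hFb n x
    have key : ∀ n : ℕ, ∫ x, A.indicator (fun ω => trunc n (X ω)) x ∂Pb
        = ∫ x in Λ ∩ A, trunc n (X x) ∂P₁ + ∫ x in Λᶜ ∩ A, trunc n (X x) ∂P₂ := by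
      intro n
      rw [hpaste _ (hFmeas n) ⟨n, hFb n⟩]
      rw [integral_add
        (wInd_integrable
          (integrable_of_eqOnSA hG h₁ stronglyMeasurable_condExp integrable_condExp) hΛm)
        (wInd_integrable
          (integrable_of_eqOnSA hG h₂ stronglyMeasurable_condExp integrable_condExp) hΛm.compl)]
      congr 1
      · rw [← integral_eq_of_eqOnSA hG h₁ (stronglyMeasurable_condExp.indicator hΛ),
          wIntegral_indicator hΛm, setIntegral_condExp hG (hFint P₁ hP₁ n) hΛ,
          wSetIntegral_indicator hAm]
      · rw [← integral_eq_of_eqOnSA hG h₂ (stronglyMeasurable_condExp.indicator hΛ.compl),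
          wIntegral_indicator hΛm.compl, setIntegral_condExp hG (hFint P₂ hP₂ n) hΛ.compl,
          wSetIntegral_indicator hAm]
    have lim₀ : Tendsto (fun n : ℕ => ∫ x, A.indicator (fun ω => trunc n (X ω)) x ∂Pb)
        atTop (nhds (∫ x in A, X x ∂Pb)) := by
      rw [← wIntegral_indicator hAm]
      refine tendsto_integral_of_dominated_convergence (fun x => |X x|)
        (fun n => (hFmeas n).aestronglyMeasurable) hXb.abs
        (fun n => ae_of_all _ fun x => by rw [Real.norm_eq_abs]; exact hFabs n x)
        (ae_of_all _ fun x => ?_)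
      by_cases hx : x ∈ A
      · simp only [Set.indicator_of_mem hx]; exact tendsto_trunc (X x)
      · simp only [Set.indicator_of_notMem hx]; exact tendsto_const_nhds
    have lim₁ : Tendsto (fun n : ℕ => ∫ x in Λ ∩ A, trunc n (X x) ∂P₁)
        atTop (nhds (∫ x in Λ ∩ A, X x ∂P₁)) :=
      tendsto_integral_of_dominated_convergence (fun x => |X x|)
        (fun n => (measurable_trunc_comp hXm n).aestronglyMeasurable) (wRestrict hX₁.abs _)
        (fun n => ae_of_all _ fun x => by rw [Real.norm_eq_abs]; exact abs_trunc_le_abs n (X x))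
        (ae_of_all _ fun x => tendsto_trunc (X x))
    have lim₂ : Tendsto (fun n : ℕ => ∫ x in Λᶜ ∩ A, trunc n (X x) ∂P₂)
        atTop (nhds (∫ x in Λᶜ ∩ A, X x ∂P₂)) :=
      tendsto_integral_of_dominated_convergence (fun x => |X x|)
        (fun n => (measurable_trunc_comp hXm n).aestronglyMeasurable) (wRestrict hX₂.abs _)
        (fun n => ae_of_all _ fun x => by rw [Real.norm_eq_abs]; exact abs_trunc_le_abs n (X x))
        (ae_of_all _ fun x => tendsto_trunc (X x))
    have heq : ∫ x in A, X x ∂Pb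
        = ∫ x in Λ ∩ A, X x ∂P₁ + ∫ x in Λᶜ ∩ A, X x ∂P₂ :=
      tendsto_nhds_unique lim₀ ((lim₁.add lim₂).congr fun n => (key n).symm)
    have hR₁ : ∫ x in Λ ∩ A, X x ∂P₁ = ∫ x, (Λ ∩ A).indicator (condExp G P₁ X) x ∂P := by
      rw [← setIntegral_condExp hG hX₁ hΛA, ← wIntegral_indicator hΛAm,
        integral_eq_of_eqOnSA hG h₁ (stronglyMeasurable_condExp.indicator hΛA)]
    have hR₂ : ∫ x in Λᶜ ∩ A, X x ∂P₂ = ∫ x, (Λᶜ ∩ A).indicator (condExp G P₂ X) x ∂P := by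
      rw [← setIntegral_condExp hG hX₂ hΛcA, ← wIntegral_indicator hΛcAm,
        integral_eq_of_eqOnSA hG h₂ (stronglyMeasurable_condExp.indicator hΛcA)]
    have hgid : A.indicator (fun ω => Λ.indicator (condExp G P₁ X) ω
        + Λᶜ.indicator (condExp G P₂ X) ω)
        = fun x => (Λ ∩ A).indicator (condExp G P₁ X) x
          + (Λᶜ ∩ A).indicator (condExp G P₂ X) x := by
      funext x
      by_cases hx : x ∈ A <;> by_cases hxΛ : x ∈ Λ <;>
        simp [Set.indicator_apply, hx, hxΛ]
    rw [← wIntegral_indicator hAm,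
      integral_eq_of_eqOnSA hG ha (hgSM.indicator hA), hgid,
      integral_add (wInd_integrable hE₁P hΛAm) (wInd_integrable hE₂P hΛcAm), ← hR₁, ← hR₂]
    exact heq.symm
  have hcond : (fun ω => Λ.indicator (condExp G P₁ X) ω + Λᶜ.indicator (condExp G P₂ X) ω)
      =ᵐ[Pb] condExp G Pb X :=
    ae_eq_condExp_of_forall_setIntegral_eq hG hXb
      (fun s _ _ => wIntegrableOn hgPb s) (fun s hs _ => hseteq s hs)
      hgSM.aestronglyMeasurable
  have hcondP : condExp G Pb X =ᵐ[P] fun ω => Λ.indicator (condExp G P₁ X) ω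
      + Λᶜ.indicator (condExp G P₂ X) ω :=
    (ae_eq_of_eqOnSA hG ha hgSM stronglyMeasurable_condExp hcond).symm
  refine ⟨hcondP, ?_⟩
  intro hΛeq
  have hmax : (fun ω => Λ.indicator (condExp G P₁ X) ω + Λᶜ.indicator (condExp G P₂ X) ω)
      = fun ω => max (condExp G P₁ X ω) (condExp G P₂ X ω) := by
    funext ω
    by_cases hω : ω ∈ Λ
    · have hlt : condExp G P₂ X ω < condExp G P₁ X ω := by rw [hΛeq] at hω; exact hω
      simp only [Set.indicator_of_mem hω,
        Set.indicator_of_notMem (fun hc => hc hω : ω ∉ Λᶜ)]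
      rw [max_eq_left hlt.le, add_zero]
    · have hle' : condExp G P₁ X ω ≤ condExp G P₂ X ω := by
        rw [hΛeq] at hω; exact not_lt.mp hω
      simp only [Set.indicator_of_notMem hω, Set.indicator_of_mem (Set.mem_compl hω)]
      rw [max_eq_right hle', zero_add]
  rw [← hmax]
  exact hcondP

/-- properties of the pasting measure. -/
theorem statement0 {T : ℝ} (hT : 0 < T) {d : ℕ}
    (τ : PathSpace d → ℝ) (hτ : IsStoppingTime (rawFilt T d) (fun ω => (τ ω : WithTop ℝ)))
    (hτfin : (Set.range τ).Finite) (hτmem : ∀ ω, τ ω ∈ Set.Icc (0 : ℝ) T)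
    (P P₁ P₂ Pb : @Measure (PathSpace d) (rawSA d T))
    (hP : IsProbabilityMeasure P) (hP₁ : IsProbabilityMeasure P₁)
    (hP₂ : IsProbabilityMeasure P₂) (hPb : IsProbabilityMeasure Pb)
    (h₁ : EqOnSA hτ.measurableSpace P₁ P) (h₂ : EqOnSA hτ.measurableSpace P₂ P)
    (Λ : Set (PathSpace d)) (hΛ : MeasurableSet[hτ.measurableSpace] Λ)
    (hpaste : IsPastingOf (rawSA d T) hτ.measurableSpace P P₁ P₂ Pb Λ) :
    -- (a) `P̄ = P` on `F°_τ`
    EqOnSA hτ.measurableSpace Pb P ∧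
    -- (b) conditional expectations under the pasting
    (∀ X : PathSpace d → ℝ, Measurable[rawSA d T] X →
      Integrable X P₁ → Integrable X P₂ →
      Integrable X Pb ∧
      (condExp hτ.measurableSpace Pb X
        =ᵐ[P] fun ω => Λ.indicator (condExp hτ.measurableSpace P₁ X) ω
          + Λᶜ.indicator (condExp hτ.measurableSpace P₂ X) ω) ∧
      -- in particular, for the maximizing choice of `Λ`:
      (Λ = {ω | condExp hτ.measurableSpace P₂ X ω < condExp hτ.measurableSpace P₁ X ω} →
        condExp hτ.measurableSpace Pb X
          =ᵐ[P] fun ω => max (condExp hτ.measurableSpace P₁ X ω)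
            (condExp hτ.measurableSpace P₂ X ω))) := by
  have hG : hτ.measurableSpace ≤ rawSA d T := hτ.measurableSpace_le
  exact pasting_main hG P P₁ P₂ Pb hP hP₁ hP₂ hPb h₁ h₂ Λ hΛ hpaste
end

section
/- Suppose 𝒫 is stable under F°-pasting. Let X ∈ L¹_𝒫, let σ ≤ τ be F°-stopping times each taking finitely many values, and let P ∈ 𝒫. For each P' ∈ 𝒫(F°_σ,P), let Y_{P'} be an F°_τ-measurable, P'-integrable random variable that is a P'-essential supremum of the family {E^{P''}[X|F°_τ] : P'' ∈ 𝒫(F°_τ,P')}. Then every P-essential supremum of the family {E^{P'}[Y_{P'}|F°_σ] : P' ∈ 𝒫(F°_σ,P)} is P-a.s. equal to every P-essential supremum of the family {E^{P'}[X|F°_σ] : P' ∈ 𝒫(F°_σ,P)}. (That is, stability under F°-pasting implies F°-time-consistency of 𝒫 on L¹_𝒫.) -/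
open MeasureTheory Set Filter
open Topology

section AuxGeneral

variable {α : Type*} {m0 : MeasurableSpace α}

lemma measurableSetLe {m : MeasurableSpace α} {f g : α → ℝ} (hf : Measurable[m] f)
    (hg : Measurable[m] g) : MeasurableSet[m] {x | f x ≤ g x} :=
  measurableSet_le hf hg

lemma measurableSetLt {m : MeasurableSpace α} {f g : α → ℝ} (hf : Measurable[m] f)
    (hg : Measurable[m] g) : MeasurableSet[m] {x | f x < g x} :=
  measurableSet_lt hf hg

lemma measurableSetEqFun {m : MeasurableSpace α} {f g : α → ℝ}
    (hf : StronglyMeasurable[m] f) (hg : StronglyMeasurable[m] g) :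
    MeasurableSet[m] {x | f x = g x} :=
  MeasureTheory.StronglyMeasurable.measurableSet_eq_fun hf hg

lemma integralIndicator {μ : @Measure α m0} {f : α → ℝ} {s : Set α}
    (hs : MeasurableSet[m0] s) :
    ∫ x, s.indicator f x ∂μ = ∫ x in s, f x ∂μ := integral_indicator hs

lemma integrableIndicator {μ : @Measure α m0} {f : α → ℝ} {s : Set α}
    (hf : Integrable f μ) (hs : MeasurableSet[m0] s) : Integrable (s.indicator f) μ :=
  hf.indicator hs

lemma integrableOn_of_integrable {μ : @Measure α m0} {f : α → ℝ} {s : Set α}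
    (hf : Integrable f μ) : IntegrableOn f s μ := hf.restrict

lemma measurableISup {m : MeasurableSpace α} {f : ℕ → α → ℝ}
    (hf : ∀ n, Measurable[m] (f n)) : Measurable[m] fun x => ⨆ n, f n x :=
  Measurable.iSup hf

lemma measurableToStrongly {m : MeasurableSpace α} {f : α → ℝ} (hf : Measurable[m] f) :
    StronglyMeasurable[m] f := hf.stronglyMeasurable

lemma EqOnSA.mono' {G G' : MeasurableSpace α} {P Q : @Measure α m0} (h : EqOnSA G' P Q)
    (hGG' : G ≤ G') : EqOnSA G P Q := fun A hA => h A (hGG' A hA)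

lemma EqOnSA.symm' {G : MeasurableSpace α} {P Q : @Measure α m0} (h : EqOnSA G P Q) :
    EqOnSA G Q P := fun A hA => (h A hA).symm

lemma EqOnSA.trim_eq {G : MeasurableSpace α} {P Q : @Measure α m0} (h : EqOnSA G P Q)
    (hG : G ≤ m0) : P.trim hG = Q.trim hG := by
  refine @Measure.ext α G _ _ fun s hs => ?_
  rw [trim_measurableSet_eq hG hs, trim_measurableSet_eq hG hs]
  exact h s hs

lemma EqOnSA.ae_transfer {G : MeasurableSpace α} {P Q : @Measure α m0} (h : EqOnSA G P Q)
    {p : α → Prop} (hp : MeasurableSet[G] {x | ¬ p x}) (hP : ∀ᵐ x ∂P, p x) :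
    ∀ᵐ x ∂Q, p x := by
  rw [ae_iff] at hP ⊢
  rw [← h _ hp]
  exact hP

lemma EqOnSA.integral_eq {G : MeasurableSpace α} {P Q : @Measure α m0} (h : EqOnSA G P Q)
    (hG : G ≤ m0) {f : α → ℝ} (hf : StronglyMeasurable[G] f) :
    ∫ x, f x ∂P = ∫ x, f x ∂Q := by
  rw [integral_trim hG hf, integral_trim hG hf, h.trim_eq hG]

lemma EqOnSA.integrable_iff {G : MeasurableSpace α} {P Q : @Measure α m0} (h : EqOnSA G P Q)
    (hG : G ≤ m0) {f : α → ℝ} (hf : StronglyMeasurable[G] f) :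
    Integrable f P ↔ Integrable f Q := by
  constructor
  · intro hi
    refine integrable_of_integrable_trim hG ?_
    rw [← h.trim_eq hG]
    exact hi.trim hG hf
  · intro hi
    refine integrable_of_integrable_trim hG ?_
    rw [h.trim_eq hG]
    exact hi.trim hG hf

lemma EqOnSA.ae_le_transfer {G : MeasurableSpace α} {P Q : @Measure α m0} (h : EqOnSA G P Q)
    {f g : α → ℝ} (hf : StronglyMeasurable[G] f) (hg : StronglyMeasurable[G] g)
    (hle : f ≤ᵐ[P] g) : f ≤ᵐ[Q] g := by
  refine h.ae_transfer ?_ hle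
  have : {x | ¬ f x ≤ g x} = {x | g x < f x} := by ext x; simp [not_le]
  rw [this]
  exact measurableSetLt hg.measurable hf.measurable

lemma EqOnSA.ae_eq_transfer {G : MeasurableSpace α} {P Q : @Measure α m0} (h : EqOnSA G P Q)
    {f g : α → ℝ} (hf : StronglyMeasurable[G] f) (hg : StronglyMeasurable[G] g)
    (heq : f =ᵐ[P] g) : f =ᵐ[Q] g := by
  refine h.ae_transfer ?_ heq
  have : {x | ¬ f x = g x} = {x | f x = g x}ᶜ := rfl
  rw [this]
  exact (measurableSetEqFun hf hg).compl

lemma ae_eq_of_ae_le_of_integral_ge {P : @Measure α m0} {f g : α → ℝ}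
    (hf : Integrable f P) (hg : Integrable g P) (hfg : f ≤ᵐ[P] g)
    (hint : ∫ x, g x ∂P ≤ ∫ x, f x ∂P) : f =ᵐ[P] g := by
  have h0 : ∫ x, (g - f) x ∂P = 0 := by
    rw [integral_sub' hg hf]
    have h1 : ∫ x, f x ∂P ≤ ∫ x, g x ∂P := integral_mono_ae hf hg hfg
    linarith
  have hnn : 0 ≤ᵐ[P] (g - f) := by
    filter_upwards [hfg] with x hx
    simp only [Pi.sub_apply, Pi.zero_apply, sub_nonneg]
    exact hx
  have := (integral_eq_zero_iff_of_nonneg_ae hnn (hg.sub hf)).mp h0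
  filter_upwards [this] with x hx
  have : g x - f x = 0 := hx
  linarith

/-- The conditional expectation only depends on the measure through its restriction to a
σ-algebra `m'` containing `m`, provided the function is `m'`-measurable. -/
lemma condExp_congr_eqOnSA {m m' : MeasurableSpace α} (hmm' : m ≤ m') (hm' : m' ≤ m0)
    {P Q : @Measure α m0} [IsProbabilityMeasure P] [IsProbabilityMeasure Q]
    (h : EqOnSA m' Q P) {f : α → ℝ} (hf : StronglyMeasurable[m'] f)
    (hfP : Integrable f P) :
    condExp m Q f =ᵐ[P] condExp m P f := by
  have hm : m ≤ m0 := hmm'.trans hm'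
  have hfQ : Integrable f Q := (h.integrable_iff hm' hf).mpr hfP
  refine ae_eq_condExp_of_forall_setIntegral_eq hm hfP ?_ ?_ ?_
  · intro s _ _
    have h1 : StronglyMeasurable[m'] (condExp m Q f) := stronglyMeasurable_condExp.mono hmm'
    have h2 : Integrable (condExp m Q f) Q := integrable_condExp
    have h3 : Integrable (condExp m Q f) P := (h.integrable_iff hm' h1).mp h2
    exact h3.restrict
  · intro s hs _
    have hsm' : MeasurableSet[m'] s := hmm' s hs
    have key : ∀ φ : α → ℝ, StronglyMeasurable[m'] φ →
        ∫ x in s, φ x ∂P = ∫ x in s, φ x ∂Q := by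
      intro φ hφ
      rw [← integralIndicator (hm' s hsm'), ← integralIndicator (hm' s hsm')]
      exact h.symm'.integral_eq hm' (hφ.indicator hsm')
    have h1 : StronglyMeasurable[m'] (condExp m Q f) := stronglyMeasurable_condExp.mono hmm'
    rw [key _ h1, key _ hf]
    exact setIntegral_condExp hm hfQ hs
  · exact stronglyMeasurable_condExp.aestronglyMeasurable

end AuxGeneral

section AuxPath

variable {T : ℝ} {d : ℕ}

lemma stoppingTime_le_ambient {τ : PathSpace d → ℝ}
    (hτ : IsStoppingTime (rawFilt T d) (fun ω => (τ ω : WithTop ℝ))) (hmem : ∀ ω, τ ω ∈ Set.Icc (0:ℝ) T) :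
    hτ.measurableSpace ≤ rawSA d T := by
  intro A hA
  have h := hA.2 T
  have hA' : A ∩ {ω | (τ ω : WithTop ℝ) ≤ ((T : ℝ) : WithTop ℝ)} = A :=
    Set.inter_eq_self_of_subset_left fun ω _ => WithTop.coe_le_coe.mpr (hmem ω).2
  rw [hA'] at h
  exact (rawFilt T d).le T A h

/-- Directedness of the family of conditional expectations, by pasting. -/
lemma directed_step
    (𝔓 : Set (@Measure (PathSpace d) (rawSA d T)))
    (hprob : ∀ P ∈ 𝔓, IsProbabilityMeasure P)
    (hstable : StableUnderPasting T d 𝔓)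
    (X : PathSpace d → ℝ) (hXint : ∀ P ∈ 𝔓, Integrable X P)
    {τ : PathSpace d → ℝ} (hτ : IsStoppingTime (rawFilt T d) (fun ω => (τ ω : WithTop ℝ)))
    (hτfin : (Set.range τ).Finite) (hτmem : ∀ ω, τ ω ∈ Set.Icc (0:ℝ) T)
    {P' : @Measure (PathSpace d) (rawSA d T)} (hP' : P' ∈ 𝔓)
    {Q₁ Q₂ : @Measure (PathSpace d) (rawSA d T)}
    (hQ₁ : Q₁ ∈ MSet 𝔓 hτ.measurableSpace P') (hQ₂ : Q₂ ∈ MSet 𝔓 hτ.measurableSpace P') :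
    ∃ Q₃ ∈ MSet 𝔓 hτ.measurableSpace P',
      (fun x => condExp hτ.measurableSpace Q₁ X x ⊔ condExp hτ.measurableSpace Q₂ X x)
        =ᵐ[P'] condExp hτ.measurableSpace Q₃ X := by
  classical
  set mτ := hτ.measurableSpace with hmτ
  have hτle : mτ ≤ rawSA d T := stoppingTime_le_ambient hτ hτmem
  haveI := hprob P' hP'
  haveI := hprob Q₁ hQ₁.1
  haveI := hprob Q₂ hQ₂.1
  set c₁ := condExp mτ Q₁ X with hc₁def
  set c₂ := condExp mτ Q₂ X with hc₂def
  have hc₁ : StronglyMeasurable[mτ] c₁ := stronglyMeasurable_condExp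
  have hc₂ : StronglyMeasurable[mτ] c₂ := stronglyMeasurable_condExp
  set Λ : Set (PathSpace d) := {x | c₂ x ≤ c₁ x} with hΛdef
  have hΛ : MeasurableSet[mτ] Λ := measurableSetLe hc₂.measurable hc₁.measurable
  have hΛ0 : MeasurableSet[rawSA d T] Λ := hτle _ hΛ
  set Pb : @Measure (PathSpace d) (rawSA d T) := Q₁.restrict Λ + Q₂.restrict Λᶜ with hPbdef
  haveI : IsFiniteMeasure (Q₁.restrict Λ) := ⟨by
    rw [Measure.restrict_apply_univ]; exact measure_lt_top _ _⟩
  haveI : IsFiniteMeasure (Q₂.restrict Λᶜ) := ⟨by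
    rw [Measure.restrict_apply_univ]; exact measure_lt_top _ _⟩
  -- the pasting property
  have hPaste : IsPastingOf (rawSA d T) mτ P' Q₁ Q₂ Pb Λ := by
    intro h hmeas hbdd
    obtain ⟨C, hC⟩ := hbdd
    have hsm : StronglyMeasurable[rawSA d T] h := hmeas.stronglyMeasurable
    have hint : ∀ (μ : @Measure (PathSpace d) (rawSA d T)), IsFiniteMeasure μ →
        Integrable h μ := by
      intro μ hμ
      exact (integrable_const C).mono' hsm.aestronglyMeasurable
        (ae_of_all _ fun x => by rw [Real.norm_eq_abs]; exact hC x)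
    have hintQ₁ : Integrable h Q₁ := hint Q₁ inferInstance
    have hintQ₂ : Integrable h Q₂ := hint Q₂ inferInstance
    have hcondint₁ : Integrable (condExp mτ Q₁ h) P' :=
      (hQ₁.2.integrable_iff hτle stronglyMeasurable_condExp).mp integrable_condExp
    have hcondint₂ : Integrable (condExp mτ Q₂ h) P' :=
      (hQ₂.2.integrable_iff hτle stronglyMeasurable_condExp).mp integrable_condExp
    rw [integral_add_measure (hint _ inferInstance) (hint _ inferInstance)]
    rw [integral_add (integrableIndicator hcondint₁ hΛ0) (integrableIndicator hcondint₂ hΛ0.compl)]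
    have h₁ : ∫ x, Λ.indicator (condExp mτ Q₁ h) x ∂P' = ∫ x, h x ∂Q₁.restrict Λ := by
      rw [← hQ₁.2.integral_eq hτle (stronglyMeasurable_condExp.indicator hΛ),
        integralIndicator hΛ0]
      exact setIntegral_condExp hτle hintQ₁ hΛ
    have h₂ : ∫ x, Λᶜ.indicator (condExp mτ Q₂ h) x ∂P' = ∫ x, h x ∂Q₂.restrict Λᶜ := by
      rw [← hQ₂.2.integral_eq hτle (stronglyMeasurable_condExp.indicator hΛ.compl),
        integralIndicator hΛ0.compl]
      exact setIntegral_condExp hτle hintQ₂ hΛ.compl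
    rw [h₁, h₂]
  have hPb𝔓 : Pb ∈ 𝔓 := hstable P' hP' τ hτ hτfin hτmem Λ hΛ Q₁ hQ₁ Q₂ hQ₂ Pb hPaste
  haveI : IsProbabilityMeasure Pb := hprob Pb hPb𝔓
  have hPbeq : EqOnSA mτ Pb P' := by
    intro A hA
    have hA0 : MeasurableSet[rawSA d T] A := hτle A hA
    rw [hPbdef]
    rw [Measure.add_apply, Measure.restrict_apply hA0, Measure.restrict_apply hA0,
      hQ₁.2 _ (hA.inter hΛ), hQ₂.2 _ (hA.inter hΛ.compl), ← Set.diff_eq]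
    exact measure_inter_add_diff A hΛ0
  -- identify the conditional expectation of X under Pb
  set g : PathSpace d → ℝ := fun x => Λ.indicator c₁ x + Λᶜ.indicator c₂ x with hgdef
  have hgsm : StronglyMeasurable[mτ] g :=
    (hc₁.indicator hΛ).add (hc₂.indicator hΛ.compl)
  have hXQ₁ : Integrable X Q₁ := hXint Q₁ hQ₁.1
  have hXQ₂ : Integrable X Q₂ := hXint Q₂ hQ₂.1
  have hzero₂ : (Λ.indicator c₁) =ᵐ[Q₂.restrict Λᶜ] 0 := by
    rw [EventuallyEq, ae_restrict_iff' hΛ0.compl]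
    exact ae_of_all _ fun x hx => Set.indicator_of_notMem (by simpa using hx) _
  have hzero₁ : (Λᶜ.indicator c₂) =ᵐ[Q₁.restrict Λ] 0 := by
    rw [EventuallyEq, ae_restrict_iff' hΛ0]
    exact ae_of_all _ fun x hx => Set.indicator_of_notMem (by simpa using hx) _
  have hgint₁ : Integrable g (Q₁.restrict Λ) :=
    ((integrableIndicator integrable_condExp hΛ0).restrict).add
      ((integrable_zero _ _ _).congr hzero₁.symm)
  have hgint₂ : Integrable g (Q₂.restrict Λᶜ) :=
    ((integrable_zero _ _ _).congr hzero₂.symm).add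
      ((integrableIndicator integrable_condExp hΛ0.compl).restrict)
  have hcond : g =ᵐ[Pb] condExp mτ Pb X := by
    refine ae_eq_condExp_of_forall_setIntegral_eq hτle (hXint Pb hPb𝔓) ?_ ?_ ?_
    · intro s _ _
      exact (hgint₁.add_measure hgint₂).restrict
    · intro s hs _
      have hsm0 : MeasurableSet[rawSA d T] s := hτle s hs
      have e₁ : ∫ x in s, g x ∂Pb
          = ∫ x in s, g x ∂(Q₁.restrict Λ) + ∫ x in s, g x ∂(Q₂.restrict Λᶜ) := by
        rw [hPbdef, Measure.restrict_add]
        exact integral_add_measure hgint₁.restrict hgint₂.restrict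
      have e₂ : ∫ x in s, X x ∂Pb
          = ∫ x in s ∩ Λ, X x ∂Q₁ + ∫ x in s ∩ Λᶜ, X x ∂Q₂ := by
        rw [hPbdef, Measure.restrict_add]
        rw [integral_add_measure (hXQ₁.restrict.restrict) (hXQ₂.restrict.restrict),
          Measure.restrict_restrict hsm0, Measure.restrict_restrict hsm0]
      have e₃ : ∫ x in s, g x ∂(Q₁.restrict Λ) = ∫ x in s ∩ Λ, X x ∂Q₁ := by
        rw [Measure.restrict_restrict hsm0]
        have hcongr : g =ᵐ[Q₁.restrict (s ∩ Λ)] c₁ := by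
          rw [EventuallyEq, ae_restrict_iff' (hsm0.inter hΛ0)]
          refine ae_of_all _ fun x hx => ?_
          rw [hgdef]
          simp only [Set.indicator_of_mem hx.2,
            Set.indicator_of_notMem (Set.notMem_compl_iff.mpr hx.2), add_zero]
        rw [integral_congr_ae hcongr]
        exact setIntegral_condExp hτle hXQ₁ (hs.inter hΛ)
      have e₄ : ∫ x in s, g x ∂(Q₂.restrict Λᶜ) = ∫ x in s ∩ Λᶜ, X x ∂Q₂ := by
        rw [Measure.restrict_restrict hsm0]
        have hcongr : g =ᵐ[Q₂.restrict (s ∩ Λᶜ)] c₂ := by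
          rw [EventuallyEq, ae_restrict_iff' (hsm0.inter hΛ0.compl)]
          refine ae_of_all _ fun x hx => ?_
          rw [hgdef]
          simp only [Set.indicator_of_mem hx.2,
            Set.indicator_of_notMem (show x ∉ Λ by simpa using hx.2), zero_add]
        rw [integral_congr_ae hcongr]
        exact setIntegral_condExp hτle hXQ₂ (hs.inter hΛ.compl)
      rw [e₁, e₂, e₃, e₄]
    · exact hgsm.aestronglyMeasurable
  have hcondP' : g =ᵐ[P'] condExp mτ Pb X :=
    hPbeq.ae_eq_transfer hgsm stronglyMeasurable_condExp hcond
  have hgmax : g = fun x => c₁ x ⊔ c₂ x := by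
    funext x
    by_cases hx : x ∈ Λ
    · rw [hgdef]
      simp only [Set.indicator_of_mem hx,
        Set.indicator_of_notMem (Set.notMem_compl_iff.mpr hx), add_zero]
      exact (sup_eq_left.mpr hx).symm
    · rw [hgdef]
      simp only [Set.indicator_of_mem (Set.mem_compl hx), Set.indicator_of_notMem hx, zero_add]
      exact (sup_eq_right.mpr (le_of_lt (lt_of_not_ge hx))).symm
  exact ⟨Pb, ⟨hPb𝔓, hPbeq⟩, hgmax ▸ hcondP'⟩

end AuxPath

/-- stability under `F°`-pasting implies `F°`-time-consistency of `𝔓` on `L¹_𝔓`. -/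
theorem statement2 {T : ℝ} (hT : 0 < T) {d : ℕ}
    (𝔓 : Set (@Measure (PathSpace d) (rawSA d T))) (h𝔓 : 𝔓.Nonempty)
    (hprob : ∀ P ∈ 𝔓, IsProbabilityMeasure P)
    (hstable : StableUnderPasting T d 𝔓)
    (X : PathSpace d → ℝ) (hX : MemL1 (rawSA d T) 𝔓 X)
    (σ τ : PathSpace d → ℝ)
    (hσ : IsStoppingTime (rawFilt T d) (fun ω => (σ ω : WithTop ℝ)))
    (hτ : IsStoppingTime (rawFilt T d) (fun ω => (τ ω : WithTop ℝ)))
    (hσfin : (Set.range σ).Finite) (hτfin : (Set.range τ).Finite)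
    (hσmem : ∀ ω, σ ω ∈ Set.Icc (0 : ℝ) T) (hτmem : ∀ ω, τ ω ∈ Set.Icc (0 : ℝ) T)
    (hστ : ∀ ω, σ ω ≤ τ ω)
    (P : @Measure (PathSpace d) (rawSA d T)) (hP : P ∈ 𝔓)
    -- for each `P' ∈ 𝔓(F°_σ, P)`, a version `Y P'` of the inner essential supremum
    (Y : @Measure (PathSpace d) (rawSA d T) → PathSpace d → ℝ)
    (hY : ∀ P' ∈ MSet 𝔓 hσ.measurableSpace P,
      Measurable[hτ.measurableSpace] (Y P') ∧ Integrable (Y P') P' ∧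
      IsEssSupOf P' (condExpFam 𝔓 hτ.measurableSpace P' X) (Y P')) :
    -- the two essential suprema at `σ` coincide `P`-a.s.
    ∀ Z₁ Z₂ : PathSpace d → ℝ,
      IsEssSupOf P {g | ∃ P' ∈ MSet 𝔓 hσ.measurableSpace P,
        g = condExp hσ.measurableSpace P' (Y P')} Z₁ →
      IsEssSupOf P (condExpFam 𝔓 hσ.measurableSpace P X) Z₂ →
      Z₁ =ᵐ[P] Z₂ := by
  classical
  intro Z₁ Z₂ hZ₁ hZ₂
  set mσ := hσ.measurableSpace with hmσdef
  set mτ := hτ.measurableSpace with hmτdef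
  have hσle : mσ ≤ rawSA d T := stoppingTime_le_ambient hσ hσmem
  have hτle : mτ ≤ rawSA d T := stoppingTime_le_ambient hτ hτmem
  have hστle : mσ ≤ mτ := hσ.measurableSpace_mono hτ fun ω => WithTop.coe_le_coe.mpr (hστ ω)
  haveI : IsProbabilityMeasure P := hprob P hP
  have hXint : ∀ Q ∈ 𝔓, Integrable X Q := hX.2.1
  have hMSetτσ : ∀ P' Q : @Measure (PathSpace d) (rawSA d T), P' ∈ MSet 𝔓 mσ P →
      Q ∈ MSet 𝔓 mτ P' → Q ∈ MSet 𝔓 mσ P := by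
    intro P' Q hP' hQ
    exact ⟨hQ.1, fun A hA => ((hQ.2.mono' hστle) A hA).trans (hP'.2 A hA)⟩
  -- Step A : each member of the X-family at σ is dominated by a member of the Y-family
  have stepA : ∀ P' ∈ MSet 𝔓 mσ P, condExp mσ P' X ≤ᵐ[P] condExp mσ P' (Y P') := by
    intro P' hP'
    haveI : IsProbabilityMeasure P' := hprob P' hP'.1
    obtain ⟨hYmeas, hYint, hYess⟩ := hY P' hP'
    have h1 : condExp mσ P' X =ᵐ[P'] condExp mσ P' (condExp mτ P' X) :=
      (condExp_condExp_of_le hστle hτle).symm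
    have h2 : condExp mτ P' X ≤ᵐ[P'] Y P' :=
      hYess.1 _ ⟨P', ⟨hP'.1, fun A _ => rfl⟩, rfl⟩
    have h3 : condExp mσ P' (condExp mτ P' X) ≤ᵐ[P'] condExp mσ P' (Y P') :=
      condExp_mono integrable_condExp hYint h2
    have h4 : condExp mσ P' X ≤ᵐ[P'] condExp mσ P' (Y P') := h1.le.trans h3
    exact hP'.2.ae_le_transfer stronglyMeasurable_condExp stronglyMeasurable_condExp h4
  have hZ₂leZ₁ : Z₂ ≤ᵐ[P] Z₁ := by
    refine hZ₂.2 Z₁ ?_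
    rintro f ⟨P', hP', rfl⟩
    exact (stepA P' hP').trans (hZ₁.1 _ ⟨P', hP', rfl⟩)
  -- Step B : each member of the Y-family at σ is dominated by Z₂
  have stepB : ∀ P' ∈ MSet 𝔓 mσ P, condExp mσ P' (Y P') ≤ᵐ[P] Z₂ := by
    intro P' hP'
    haveI : IsProbabilityMeasure P' := hprob P' hP'.1
    obtain ⟨hYmeas, hYint, hYess⟩ := hY P' hP'
    have hfam_int : ∀ Q ∈ MSet 𝔓 mτ P', Integrable (condExp mτ Q X) P' := fun Q hQ =>
      (hQ.2.integrable_iff hτle stronglyMeasurable_condExp).mp integrable_condExp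
    have hfam_le : ∀ Q ∈ MSet 𝔓 mτ P', condExp mτ Q X ≤ᵐ[P'] Y P' := fun Q hQ =>
      hYess.1 _ ⟨Q, hQ, rfl⟩
    set S : Set ℝ :=
      {r | ∃ Q ∈ MSet 𝔓 mτ P', r = ∫ x, condExp mτ Q X x ∂P'} with hSdef
    have hP'self : P' ∈ MSet 𝔓 mτ P' := ⟨hP'.1, fun A _ => rfl⟩
    have hSne : S.Nonempty := ⟨_, P', hP'self, rfl⟩
    have hSbdd : BddAbove S := by
      refine ⟨∫ x, Y P' x ∂P', ?_⟩
      rintro r ⟨Q, hQ, rfl⟩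
      exact integral_mono_ae (hfam_int Q hQ) hYint (hfam_le Q hQ)
    obtain ⟨u, hu_mono, hu_tend, hu_mem⟩ := exists_seq_tendsto_sSup hSne hSbdd
    choose R hR using hu_mem
    have dstep : ∀ {Q₁ Q₂ : @Measure (PathSpace d) (rawSA d T)},
        Q₁ ∈ MSet 𝔓 mτ P' → Q₂ ∈ MSet 𝔓 mτ P' →
        ∃ Q₃ ∈ MSet 𝔓 mτ P',
          (fun x => condExp mτ Q₁ X x ⊔ condExp mτ Q₂ X x) =ᵐ[P'] condExp mτ Q₃ X :=
      fun h₁ h₂ => directed_step 𝔓 hprob hstable X hXint hτ hτfin hτmem hP'.1 h₁ h₂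
    let Qseq : ℕ → {Q : @Measure (PathSpace d) (rawSA d T) // Q ∈ MSet 𝔓 mτ P'} := fun n =>
      Nat.rec ⟨R 0, (hR 0).1⟩
        (fun m Qm => ⟨(dstep Qm.2 (hR (m+1)).1).choose,
          (dstep Qm.2 (hR (m+1)).1).choose_spec.1⟩) n
    set g : ℕ → PathSpace d → ℝ := fun n => condExp mτ (Qseq n).1 X with hgdef
    have hQseq : ∀ n, (Qseq n).1 ∈ MSet 𝔓 mτ P' := fun n => (Qseq n).2
    have hstep : ∀ n, (fun x => g n x ⊔ condExp mτ (R (n+1)) X x) =ᵐ[P'] g (n+1) :=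
      fun n => (dstep (Qseq n).2 (hR (n+1)).1).choose_spec.2
    have hgint : ∀ n, Integrable (g n) P' := fun n => hfam_int _ (hQseq n)
    have hgle : ∀ n, g n ≤ᵐ[P'] g (n+1) := by
      intro n
      filter_upwards [hstep n] with x hx
      exact le_sup_left.trans_eq hx
    have hfgae : ∀ n, condExp mτ (R (n+1)) X ≤ᵐ[P'] g (n+1) := by
      intro n
      filter_upwards [hstep n] with x hx
      exact le_sup_right.trans_eq hx
    have hgleY : ∀ n, g n ≤ᵐ[P'] Y P' := fun n => hfam_le _ (hQseq n)
    have hmono : ∀ᵐ x ∂P', ∀ n, g n x ≤ g (n+1) x := ae_all_iff.mpr hgle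
    have hgY : ∀ᵐ x ∂P', ∀ n, g n x ≤ Y P' x := ae_all_iff.mpr hgleY
    have hgS : ∀ n, ∫ x, g n x ∂P' ≤ sSup S := fun n =>
      le_csSup hSbdd ⟨(Qseq n).1, hQseq n, rfl⟩
    have hgtend : Tendsto (fun n => ∫ x, g n x ∂P') atTop (𝓝 (sSup S)) := by
      have h1 : Tendsto (fun n => ∫ x, g (n+1) x ∂P') atTop (𝓝 (sSup S)) := by
        refine tendsto_of_tendsto_of_tendsto_of_le_of_le
          (hu_tend.comp (tendsto_add_atTop_nat 1)) tendsto_const_nhds ?_ ?_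
        · intro n
          have : u (n+1) = ∫ x, condExp mτ (R (n+1)) X x ∂P' := (hR (n+1)).2
          rw [Function.comp_apply, this]
          exact integral_mono_ae (hfam_int _ (hR (n+1)).1) (hgint (n+1)) (hfgae n)
        · intro n
          exact hgS (n+1)
      exact (tendsto_add_atTop_iff_nat 1).mp h1
    set G : PathSpace d → ℝ := fun x => ⨆ n, g n x with hGdef
    have hGsm : StronglyMeasurable[mτ] G :=
      measurableToStrongly (measurableISup fun n => stronglyMeasurable_condExp.measurable)
    have hGle : ∀ᵐ x ∂P', G x ≤ Y P' x := by
      filter_upwards [hgY] with x hx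
      exact ciSup_le fun n => hx n
    have hGtend : ∀ᵐ x ∂P', Tendsto (fun n => g n x) atTop (𝓝 (G x)) := by
      filter_upwards [hmono, hgY] with x hx hb
      exact tendsto_atTop_ciSup (monotone_nat_of_le_succ hx)
        ⟨Y P' x, by rintro r ⟨n, rfl⟩; exact hb n⟩
    have hGbound : ∀ᵐ x ∂P', ‖G x‖ ≤ |g 0 x| + |Y P' x| := by
      filter_upwards [hmono, hgY] with x hx hb
      have h1 : g 0 x ≤ G x := le_ciSup ⟨Y P' x, by rintro r ⟨n, rfl⟩; exact hb n⟩ 0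
      have h2 : G x ≤ Y P' x := ciSup_le fun n => hb n
      rw [Real.norm_eq_abs, abs_le]
      constructor
      · have := neg_abs_le (g 0 x)
        have := abs_nonneg (Y P' x)
        linarith
      · have := le_abs_self (Y P' x)
        have := abs_nonneg (g 0 x)
        linarith
    have hGint : Integrable G P' :=
      Integrable.mono' ((hgint 0).abs.add hYint.abs)
        ((hGsm.mono hτle).aestronglyMeasurable) hGbound
    have hmonoae : ∀ᵐ x ∂P', Monotone fun n => g n x := by
      filter_upwards [hmono] with x hx
      exact monotone_nat_of_le_succ hx
    have hGint_eq : ∫ x, G x ∂P' = sSup S :=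
      tendsto_nhds_unique
        (integral_tendsto_of_tendsto_of_monotone hgint hGint hmonoae hGtend) hgtend
    -- G is a P'-a.e. upper bound of the τ-family
    have hub : ∀ f ∈ condExpFam 𝔓 mτ P' X, f ≤ᵐ[P'] G := by
      rintro f ⟨Qf, hQf, rfl⟩
      have hfint : Integrable (condExp mτ Qf X) P' := hfam_int _ hQf
      have hmaxint : ∀ n, Integrable (fun x => g n x ⊔ condExp mτ Qf X x) P' :=
        fun n => (hgint n).sup hfint
      have hmaxle : ∀ n, ∫ x, (g n x ⊔ condExp mτ Qf X x) ∂P' ≤ sSup S := by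
        intro n
        obtain ⟨Q', hQ', heq⟩ := dstep (hQseq n) hQf
        rw [integral_congr_ae heq]
        exact le_csSup hSbdd ⟨Q', hQ', rfl⟩
      have hmaxtend : ∀ᵐ x ∂P',
          Tendsto (fun n => g n x ⊔ condExp mτ Qf X x) atTop
            (𝓝 (G x ⊔ condExp mτ Qf X x)) := by
        filter_upwards [hGtend] with x hx
        exact hx.max tendsto_const_nhds
      have hGfint : Integrable (fun x => G x ⊔ condExp mτ Qf X x) P' := hGint.sup hfint
      have hmaxmono : ∀ᵐ x ∂P', Monotone fun n => g n x ⊔ condExp mτ Qf X x := by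
        filter_upwards [hmonoae] with x hx
        exact fun a b hab => sup_le_sup_right (hx hab) _
      have hint2 := integral_tendsto_of_tendsto_of_monotone hmaxint hGfint hmaxmono hmaxtend
      have hfin : ∫ x, (G x ⊔ condExp mτ Qf X x) ∂P' ≤ sSup S :=
        le_of_tendsto hint2 (Filter.Eventually.of_forall hmaxle)
      have hGmax : G =ᵐ[P'] fun x => G x ⊔ condExp mτ Qf X x := by
        refine ae_eq_of_ae_le_of_integral_ge hGint hGfint
          (ae_of_all _ fun x => le_sup_left) ?_
        rw [hGint_eq]
        exact hfin
      filter_upwards [hGmax] with x hx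
      calc condExp mτ Qf X x ≤ G x ⊔ condExp mτ Qf X x := le_sup_right
        _ = G x := hx.symm
    have hYG : Y P' =ᵐ[P'] G := (hYess.2 G hub).antisymm hGle
    -- conditional expectations at σ
    set k : ℕ → PathSpace d → ℝ := fun n => condExp mσ ((Qseq n).1) X with hkdef
    have hk_in : ∀ n, k n ∈ condExpFam 𝔓 mσ P X :=
      fun n => ⟨(Qseq n).1, hMSetτσ P' (Qseq n).1 hP' (hQseq n), rfl⟩
    have hkZ₂ : ∀ᵐ x ∂P, ∀ n, k n x ≤ Z₂ x := ae_all_iff.mpr fun n => hZ₂.1 _ (hk_in n)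
    have hkg : ∀ n, k n =ᵐ[P'] condExp mσ P' (g n) := by
      intro n
      haveI : IsProbabilityMeasure ((Qseq n).1 :
        @Measure (PathSpace d) (rawSA d T)) := hprob _ (hQseq n).1
      have t1 : condExp mσ ((Qseq n).1) X =ᵐ[(Qseq n).1] condExp mσ ((Qseq n).1) (g n) :=
        (condExp_condExp_of_le hστle hτle).symm
      have t1' : condExp mσ ((Qseq n).1) X =ᵐ[P'] condExp mσ ((Qseq n).1) (g n) :=
        ((hQseq n).2.mono' hστle).ae_eq_transfer stronglyMeasurable_condExp
          stronglyMeasurable_condExp t1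
      have t2 : condExp mσ ((Qseq n).1) (g n) =ᵐ[P'] condExp mσ P' (g n) :=
        condExp_congr_eqOnSA hστle hτle (hQseq n).2 stronglyMeasurable_condExp (hgint n)
      exact t1'.trans t2
    have hhint : ∀ n, Integrable (condExp mσ P' (g n)) P' := fun n => integrable_condExp
    have hhle : ∀ n, condExp mσ P' (g n) ≤ᵐ[P'] condExp mσ P' (g (n+1)) :=
      fun n => condExp_mono (hgint n) (hgint (n+1)) (hgle n)
    have hhleY : ∀ n, condExp mσ P' (g n) ≤ᵐ[P'] condExp mσ P' (Y P') :=
      fun n => condExp_mono (hgint n) hYint (hgleY n)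
    have hhmono : ∀ᵐ x ∂P', ∀ n, condExp mσ P' (g n) x ≤ condExp mσ P' (g (n+1)) x :=
      ae_all_iff.mpr hhle
    have hhY : ∀ᵐ x ∂P', ∀ n, condExp mσ P' (g n) x ≤ condExp mσ P' (Y P') x :=
      ae_all_iff.mpr hhleY
    set H : PathSpace d → ℝ := fun x => ⨆ n, condExp mσ P' (g n) x with hHdef
    have hHsm : StronglyMeasurable[mσ] H :=
      measurableToStrongly (measurableISup fun n => stronglyMeasurable_condExp.measurable)
    have hHtend : ∀ᵐ x ∂P', Tendsto (fun n => condExp mσ P' (g n) x) atTop (𝓝 (H x)) := by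
      filter_upwards [hhmono, hhY] with x hx hb
      exact tendsto_atTop_ciSup (monotone_nat_of_le_succ hx)
        ⟨condExp mσ P' (Y P') x, by rintro r ⟨n, rfl⟩; exact hb n⟩
    have hHleh : ∀ᵐ x ∂P', H x ≤ condExp mσ P' (Y P') x := by
      filter_upwards [hhY] with x hb
      exact ciSup_le fun n => hb n
    have hHbound : ∀ᵐ x ∂P',
        ‖H x‖ ≤ |condExp mσ P' (g 0) x| + |condExp mσ P' (Y P') x| := by
      filter_upwards [hhmono, hhY] with x hx hb
      have h1 : condExp mσ P' (g 0) x ≤ H x :=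
        le_ciSup ⟨condExp mσ P' (Y P') x, by rintro r ⟨n, rfl⟩; exact hb n⟩ 0
      have h2 : H x ≤ condExp mσ P' (Y P') x := ciSup_le fun n => hb n
      rw [Real.norm_eq_abs, abs_le]
      constructor
      · have := neg_abs_le (condExp mσ P' (g 0) x)
        have := abs_nonneg (condExp mσ P' (Y P') x)
        linarith
      · have := le_abs_self (condExp mσ P' (Y P') x)
        have := abs_nonneg (condExp mσ P' (g 0) x)
        linarith
    have hHint : Integrable H P' :=
      Integrable.mono' ((hhint 0).abs.add integrable_condExp.abs)
        ((hHsm.mono hσle).aestronglyMeasurable) hHbound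
    have hhmonoae : ∀ᵐ x ∂P', Monotone fun n => condExp mσ P' (g n) x := by
      filter_upwards [hhmono] with x hx
      exact monotone_nat_of_le_succ hx
    have hHint_eq : ∫ x, H x ∂P' = sSup S := by
      have h1 := integral_tendsto_of_tendsto_of_monotone hhint hHint hhmonoae hHtend
      have h2 : ∀ n, ∫ x, condExp mσ P' (g n) x ∂P' = ∫ x, g n x ∂P' :=
        fun n => integral_condExp hσle
      have h3 : Tendsto (fun n => ∫ x, condExp mσ P' (g n) x ∂P') atTop (𝓝 (sSup S)) := by
        simp_rw [h2]
        exact hgtend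
      exact tendsto_nhds_unique h1 h3
    have hheq : ∫ x, condExp mσ P' (Y P') x ∂P' = sSup S := by
      rw [integral_condExp hσle, integral_congr_ae hYG, hGint_eq]
    have hHeqh : H =ᵐ[P'] condExp mσ P' (Y P') := by
      refine ae_eq_of_ae_le_of_integral_ge hHint integrable_condExp hHleh ?_
      rw [hHint_eq, hheq]
    -- rewrite H through the k's and transfer to P
    have hfinal : ∀ᵐ x ∂P', condExp mσ P' (Y P') x ≤ ⨆ n, k n x := by
      have hkg' : ∀ᵐ x ∂P', ∀ n, k n x = condExp mσ P' (g n) x := ae_all_iff.mpr hkg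
      filter_upwards [hHeqh, hkg'] with x h1 h2
      have : (⨆ n, k n x) = H x := by
        rw [hHdef]
        exact iSup_congr h2
      rw [this, h1]
    have hKms : Measurable[mσ] fun x => ⨆ n, k n x :=
      measurableISup fun n => stronglyMeasurable_condExp.measurable
    have htransf : ∀ᵐ x ∂P, condExp mσ P' (Y P') x ≤ ⨆ n, k n x := by
      refine hP'.2.ae_transfer ?_ hfinal
      have hset : {x | ¬ condExp mσ P' (Y P') x ≤ ⨆ n, k n x}
          = {x | (⨆ n, k n x) < condExp mσ P' (Y P') x} := by
        ext x; simp [not_le]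
      rw [hset]
      exact measurableSetLt hKms stronglyMeasurable_condExp.measurable
    filter_upwards [htransf, hkZ₂] with x h1 h2
    exact h1.trans (ciSup_le fun n => h2 n)
  have hZ₁leZ₂ : Z₁ ≤ᵐ[P] Z₂ := by
    refine hZ₁.2 Z₂ ?_
    rintro f ⟨P', hP', rfl⟩
    exact stepB P' hP'
  exact hZ₁leZ₂.antisymm hZ₂leZ₁
end

section
/- Let P be a probability measure on (Ω,F°_T) satisfying the augmentation hypothesis, and let τ be an F̂-stopping time taking at most countably many values. Then: (a) there exists an F°-stopping time τ° with τ = τ° P-a.s.; (b) for every F°-stopping time τ° with τ = τ° P-a.s., the σ-algebras F̂_τ and F°_{τ°} differ only by P-nullsets, i.e., for every A ∈ F̂_τ there exists A° ∈ F°_{τ°} with P(A △ A°) = 0, and for every Λ ∈ F°_{τ°} there exists Λ' ∈ F̂_τ with P(Λ △ Λ') = 0. -/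
open MeasureTheory Set Filter

noncomputable section

/-- The right-continuous filtration `F⁺`: `F⁺_t = ∩_{s ∈ (t,T]} F°_s` for `t < T`
and `F⁺_T = F°_T` (realized as `⨅_{s > t} F°_{min s T}`). -/
def FplusSA (T : ℝ) (d : ℕ) (t : ℝ) : MeasurableSpace (PathSpace d) :=
  ⨅ s ∈ Set.Ioi t, rawSA d (min s T)

lemma FplusSA_mono (T : ℝ) (d : ℕ) : Monotone (FplusSA T d) := by
  intro s t hst
  exact le_iInf₂ fun u hu => iInf₂_le u (lt_of_le_of_lt hst hu)

lemma FplusSA_le (T : ℝ) (d : ℕ) (t : ℝ) : FplusSA T d t ≤ rawSA d T := by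
  have h1 : (max t T + 1) ∈ Set.Ioi t := by
    simp only [Set.mem_Ioi]
    have := le_max_left t T
    linarith
  have h2 : min (max t T + 1) T = T := by
    have := le_max_right t T
    exact min_eq_right (by linarith)
  have := iInf₂_le (f := fun (s : ℝ) (_ : s ∈ Set.Ioi t) => rawSA d (min s T)) (max t T + 1) h1
  rwa [h2] at this

/-- The collection of `𝔓`-polar sets. -/
def IsPolar {α : Type*} {m0 : MeasurableSpace α} (𝔓 : Set (@Measure α m0)) (N : Set α) : Prop :=
  ∀ P ∈ 𝔓, P N = 0

/-- The augmented σ-algebra `F̂_t = σ(F⁺_t ∪ N^𝔓)`. -/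
def FhatSA (T : ℝ) (d : ℕ) {m0 : MeasurableSpace (PathSpace d)}
    (𝔓 : Set (@Measure (PathSpace d) m0)) (t : ℝ) : MeasurableSpace (PathSpace d) :=
  FplusSA T d t ⊔ MeasurableSpace.generateFrom {N | IsPolar 𝔓 N}

/-- The filtration `F̂`, with an ambient σ-algebra `m0` containing `F°_T` and the polar sets
(the measures of `𝔓` being understood as (uniquely) extended to `m0`). -/
def FhatFilt (T : ℝ) (d : ℕ) {m0 : MeasurableSpace (PathSpace d)}
    (𝔓 : Set (@Measure (PathSpace d) m0))
    (hB : rawSA d T ≤ m0)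
    (hN : MeasurableSpace.generateFrom {N | IsPolar 𝔓 N} ≤ m0) :
    Filtration ℝ m0 where
  seq t := FhatSA T d 𝔓 t
  mono' := fun _ _ hst => sup_le_sup_right (FplusSA_mono T d hst) _
  le' := fun t => sup_le ((FplusSA_le T d t).trans hB) hN

/-- The augmentation hypothesis for `P`: every set in `F̂_t` agrees with a set in `F°_t`
up to a `P`-null set, for every `t ∈ [0,T]`. -/
def AugHyp (T : ℝ) (d : ℕ) {m0 : MeasurableSpace (PathSpace d)}
    (𝔓 : Set (@Measure (PathSpace d) m0)) (P : @Measure (PathSpace d) m0) : Prop :=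
  ∀ t ∈ Set.Icc (0 : ℝ) T, ∀ A : Set (PathSpace d), MeasurableSet[FhatSA T d 𝔓 t] A →
    ∃ A' : Set (PathSpace d), MeasurableSet[rawSA d t] A' ∧ P (symmDiff A A') = 0

/-- Stability of `𝔓` under `F°`-pasting, for measures given on the ambient σ-algebra `m0`:
the pasting, which is a measure on `F°_T`, coincides on `F°_T` with an element of `𝔓`. -/
def StableUnderPastingE (T : ℝ) (d : ℕ) {m0 : MeasurableSpace (PathSpace d)}
    (𝔓 : Set (@Measure (PathSpace d) m0)) : Prop :=
  ∀ P ∈ 𝔓, ∀ τ : PathSpace d → ℝ, ∀ hτ : IsStoppingTime (rawFilt T d) (fun ω => (τ ω : WithTop ℝ)),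
    (Set.range τ).Finite → (∀ ω, τ ω ∈ Set.Icc (0 : ℝ) T) →
    ∀ Λ : Set (PathSpace d), MeasurableSet[hτ.measurableSpace] Λ →
    ∀ P₁ ∈ MSet 𝔓 hτ.measurableSpace P, ∀ P₂ ∈ MSet 𝔓 hτ.measurableSpace P,
    ∃ Q ∈ 𝔓, ∀ h : PathSpace d → ℝ, Measurable[rawSA d T] h → BddFun h →
      ∫ x, h x ∂Q
        = ∫ x, (Λ.indicator (condExp hτ.measurableSpace P₁ h) x
            + Λᶜ.indicator (condExp hτ.measurableSpace P₂ h) x) ∂P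

/-- A real path which is càdlàg on `[0,T]`: right-continuous on `[0,T)` and with finite
left limits on `(0,T]`. -/
def IsCadlagPath (T : ℝ) (f : ℝ → ℝ) : Prop :=
  (∀ t ∈ Set.Ico (0 : ℝ) T, Tendsto f (nhdsWithin t (Set.Ioi t)) (nhds (f t))) ∧
  (∀ t ∈ Set.Ioc (0 : ℝ) T, ∃ L : ℝ, Tendsto f (nhdsWithin t (Set.Ico 0 t)) (nhds L))

end

lemma rawSA_le_FplusSA (T : ℝ) (d : ℕ) {t : ℝ} (ht : t ≤ T) :
    rawSA d t ≤ FplusSA T d t :=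
  le_iInf₂ fun s hs => rawSA_mono (le_min (le_of_lt hs) ht)

lemma rawSA_le_FhatSA (T : ℝ) (d : ℕ) {m0 : MeasurableSpace (PathSpace d)}
    (𝔓 : Set (@Measure (PathSpace d) m0)) {t : ℝ} (ht : t ≤ T) :
    rawSA d t ≤ FhatSA T d 𝔓 t :=
  (rawSA_le_FplusSA T d ht).trans le_sup_left

lemma FhatSA_mono (T : ℝ) (d : ℕ) {m0 : MeasurableSpace (PathSpace d)}
    (𝔓 : Set (@Measure (PathSpace d) m0)) {s t : ℝ} (hst : s ≤ t) :
    FhatSA T d 𝔓 s ≤ FhatSA T d 𝔓 t :=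
  sup_le_sup_right (FplusSA_mono T d hst) _

/-- countably-valued `F̂`-stopping times agree `P`-a.s. with `F°`-stopping
times, and the corresponding stopping σ-algebras differ only by `P`-null sets. -/
theorem statement3 {T : ℝ} (hT : 0 < T) {d : ℕ}
    {m0 : MeasurableSpace (PathSpace d)}
    (𝔓 : Set (@Measure (PathSpace d) m0)) (h𝔓 : 𝔓.Nonempty)
    (hprob : ∀ P ∈ 𝔓, IsProbabilityMeasure P)
    (hB : rawSA d T ≤ m0)
    (hN : MeasurableSpace.generateFrom {N | IsPolar 𝔓 N} ≤ m0)
    (P : @Measure (PathSpace d) m0) (hPprob : IsProbabilityMeasure P)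
    (hAug : AugHyp T d 𝔓 P)
    (τ : PathSpace d → ℝ) (hτ : IsStoppingTime (FhatFilt T d 𝔓 hB hN) (fun ω => (τ ω : WithTop ℝ)))
    (hτcnt : (Set.range τ).Countable) (hτmem : ∀ ω, τ ω ∈ Set.Icc (0 : ℝ) T) :
    -- (a) existence of an `F°`-stopping time agreeing with `τ` `P`-a.s.
    (∃ τo : PathSpace d → ℝ, IsStoppingTime (rawFilt T d) (fun ω => (τo ω : WithTop ℝ)) ∧
      (∀ ω, τo ω ∈ Set.Icc (0 : ℝ) T) ∧ P {ω | τ ω ≠ τo ω} = 0) ∧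
    -- (b) for any such `τo`, the σ-algebras `F̂_τ` and `F°_{τo}` differ only by `P`-null sets
    (∀ τo : PathSpace d → ℝ, ∀ hτo : IsStoppingTime (rawFilt T d) (fun ω => (τo ω : WithTop ℝ)),
      P {ω | τ ω ≠ τo ω} = 0 →
      (∀ A : Set (PathSpace d), MeasurableSet[hτ.measurableSpace] A →
        ∃ Ao : Set (PathSpace d), MeasurableSet[hτo.measurableSpace] Ao ∧
          P (symmDiff A Ao) = 0) ∧
      (∀ Λ : Set (PathSpace d), MeasurableSet[hτo.measurableSpace] Λ →
        ∃ Λ' : Set (PathSpace d), MeasurableSet[hτ.measurableSpace] Λ' ∧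
          P (symmDiff Λ Λ') = 0)) := by
  classical
  have hVc : (Set.range τ).Countable := hτcnt
  haveI : Countable ↥(Set.range τ) := hVc.to_subtype
  have hmemV : ∀ t : ↥(Set.range τ), (t : ℝ) ∈ Set.Icc (0 : ℝ) T := by
    rintro ⟨t, ω, rfl⟩; exact hτmem ω
  have hEq : ∀ t : ℝ, MeasurableSet[FhatSA T d 𝔓 t] {ω | τ ω = t} :=
    fun t => by have hx := hτ.measurableSet_eq t; simp only [WithTop.coe_eq_coe] at hx; exact hx
  constructor
  · -- part (a)
    choose A hA1 hA2 using fun t : ↥(Set.range τ) =>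
      hAug (t : ℝ) (hmemV t) {ω | τ ω = (t : ℝ)} (hEq (t : ℝ))
    set C : ↥(Set.range τ) → Set (PathSpace d) :=
      fun t => A t \ ⋃ (s : ↥(Set.range τ)) (_ : (s : ℝ) < (t : ℝ)), A s with hC
    have hCmeas : ∀ t : ↥(Set.range τ), MeasurableSet[rawSA d (t : ℝ)] (C t) := fun t =>
      (hA1 t).diff (MeasurableSet.iUnion fun s => MeasurableSet.iUnion fun hs =>
        rawSA_mono hs.le _ (hA1 s))
    have hCdisj : ∀ (s t : ↥(Set.range τ)) (ω : PathSpace d), ω ∈ C s → ω ∈ C t → s = t := by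
      intro s t ω hs ht
      rcases lt_trichotomy (s : ℝ) (t : ℝ) with h | h | h
      · exact absurd (Set.mem_iUnion₂.mpr ⟨s, h, hs.1⟩) ht.2
      · exact Subtype.ext h
      · exact absurd (Set.mem_iUnion₂.mpr ⟨t, h, ht.1⟩) hs.2
    set τo : PathSpace d → ℝ :=
      fun ω => if h : ∃ t : ↥(Set.range τ), ω ∈ C t then ((h.choose : ℝ)) else T with hτodef
    have hτo_spec : ∀ (t : ↥(Set.range τ)) (ω), ω ∈ C t → τo ω = (t : ℝ) := by
      intro t ω hω
      have h : ∃ t : ↥(Set.range τ), ω ∈ C t := ⟨t, hω⟩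
      simp only [hτodef, dif_pos h]
      exact congrArg _ (hCdisj h.choose t ω h.choose_spec hω)
    have hτo_mem : ∀ ω, τo ω ∈ Set.Icc (0 : ℝ) T := by
      intro ω
      by_cases h : ∃ t : ↥(Set.range τ), ω ∈ C t
      · simp only [hτodef, dif_pos h]; exact hmemV h.choose
      · simp only [hτodef, dif_neg h]; exact ⟨hT.le, le_rfl⟩
    have hτo_st : IsStoppingTime (rawFilt T d) (fun ω => (τo ω : WithTop ℝ)) := by
      intro s; simp only [WithTop.coe_le_coe]
      by_cases hsT : T ≤ s
      · have huniv : {ω | τo ω ≤ s} = Set.univ := by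
          ext ω; simp only [Set.mem_setOf_eq, Set.mem_univ, iff_true]
          exact (hτo_mem ω).2.trans hsT
        rw [huniv]; exact MeasurableSet.univ
      · have heq : {ω | τo ω ≤ s} = ⋃ (t : ↥(Set.range τ)) (_ : (t : ℝ) ≤ s), C t := by
          ext ω
          simp only [Set.mem_setOf_eq, Set.mem_iUnion]
          constructor
          · intro hle
            by_cases h : ∃ t : ↥(Set.range τ), ω ∈ C t
            · refine ⟨h.choose, ?_, h.choose_spec⟩
              rw [← hτo_spec h.choose ω h.choose_spec]; exact hle
            · exfalso
              have hTeq : τo ω = T := by simp only [hτodef, dif_neg h]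
              rw [hTeq] at hle; exact hsT hle
          · rintro ⟨t, ht, hω⟩
            rw [hτo_spec t ω hω]; exact ht
        rw [heq]
        exact MeasurableSet.iUnion fun t => MeasurableSet.iUnion fun ht =>
          rawSA_mono (le_min ht (hmemV t).2) _ (hCmeas t)
    refine ⟨τo, hτo_st, hτo_mem, ?_⟩
    refine measure_mono_null ?_
      (measure_iUnion_null fun t : ↥(Set.range τ) =>
        hA2 t)
    intro ω hω
    by_contra hN'
    simp only [Set.mem_iUnion] at hN'
    push_neg at hN'
    apply hω
    have hωA : ω ∈ A ⟨τ ω, Set.mem_range_self ω⟩ := by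
      by_contra hA'
      exact hN' ⟨τ ω, Set.mem_range_self ω⟩ (Set.mem_symmDiff.mpr (Or.inl ⟨rfl, hA'⟩))
    have hωC : ω ∈ C ⟨τ ω, Set.mem_range_self ω⟩ := by
      refine ⟨hωA, ?_⟩
      intro hmem
      obtain ⟨s, hs, hωs⟩ := Set.mem_iUnion₂.mp hmem
      exact hN' s (Set.mem_symmDiff.mpr (Or.inr ⟨hωs, fun h => hs.ne' h⟩))
    exact (hτo_spec ⟨τ ω, Set.mem_range_self ω⟩ ω hωC).symm
  · -- part (b)
    intro τo hτo hnull
    constructor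
    · -- (b-i)
      intro A hA
      have hAτ : ∀ t : ↥(Set.range τ), MeasurableSet[FhatSA T d 𝔓 (t : ℝ)]
          (A ∩ {ω | τ ω = (t : ℝ)}) := by
        intro t
        have h1 := hA.2 (t : ℝ)
        simp only [WithTop.coe_le_coe] at h1
        have h2 := hτ.measurableSet_eq (t : ℝ)
        simp only [WithTop.coe_eq_coe] at h2
        have hset : A ∩ {ω | τ ω = (t : ℝ)}
            = (A ∩ {ω | τ ω ≤ (t : ℝ)}) ∩ {ω | τ ω = (t : ℝ)} := by
          ext ω
          simp only [Set.mem_inter_iff, Set.mem_setOf_eq]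
          exact ⟨fun h => ⟨⟨h.1, h.2.le⟩, h.2⟩, fun h => ⟨h.1.1, h.2⟩⟩
        rw [hset]
        exact h1.inter h2
      choose D hD1 hD2 using fun t : ↥(Set.range τ) =>
        hAug (t : ℝ) (hmemV t) _ (hAτ t)
      refine ⟨⋃ t : ↥(Set.range τ), (D t ∩ {ω | τo ω = (t : ℝ)}), ?_, ?_⟩
      · refine (hτo.measurableSet _).2 ⟨?_, fun s => ?_⟩
        · exact MeasurableSet.iUnion fun t => le_iSup (rawFilt T d) (t : ℝ) _
            ((rawSA_mono (le_min le_rfl (hmemV t).2) _ (hD1 t)).inter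
              (by have hx := hτo.measurableSet_eq (t : ℝ); simp only [WithTop.coe_eq_coe] at hx; exact hx))
        simp only [WithTop.coe_le_coe]
        have heq : (⋃ t : ↥(Set.range τ), (D t ∩ {ω | τo ω = (t : ℝ)})) ∩ {ω | τo ω ≤ s}
            = ⋃ (t : ↥(Set.range τ)) (_ : (t : ℝ) ≤ s), (D t ∩ {ω | τo ω = (t : ℝ)}) := by
          ext ω
          simp only [Set.mem_inter_iff, Set.mem_iUnion, Set.mem_setOf_eq]
          constructor
          · rintro ⟨⟨t, hD, he⟩, hle⟩; exact ⟨t, he ▸ hle, hD, he⟩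
          · rintro ⟨t, hts, hD, he⟩; exact ⟨⟨t, hD, he⟩, he ▸ hts⟩
        rw [heq]
        refine MeasurableSet.iUnion fun t => MeasurableSet.iUnion fun hts => ?_
        refine MeasurableSet.inter ?_ ?_
        · exact rawSA_mono (le_min hts (hmemV t).2) _ (hD1 t)
        · exact (rawFilt T d).mono hts _ (by have hx := hτo.measurableSet_eq (t : ℝ); simp only [WithTop.coe_eq_coe] at hx; exact hx)
      · refine measure_mono_null ?_ (measure_union_null hnull
          (measure_iUnion_null fun t : ↥(Set.range τ) => hD2 t))
        intro ω hω
        by_contra hcon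
        simp only [Set.mem_union, Set.mem_iUnion] at hcon
        push_neg at hcon
        obtain ⟨hne, hsd⟩ := hcon
        have heq : τ ω = τo ω := not_not.mp hne
        rcases Set.mem_symmDiff.mp hω with ⟨hωA, hωn⟩ | ⟨hωU, hωn⟩
        · have hin : ω ∈ A ∩ {ω' | τ ω' = τ ω} := ⟨hωA, rfl⟩
          have hD : ω ∈ D ⟨τ ω, Set.mem_range_self ω⟩ := by
            by_contra hD'
            exact hsd ⟨τ ω, Set.mem_range_self ω⟩
              (Set.mem_symmDiff.mpr (Or.inl ⟨hin, hD'⟩))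
          exact hωn (Set.mem_iUnion.mpr ⟨⟨τ ω, Set.mem_range_self ω⟩, hD, heq.symm⟩)
        · obtain ⟨t, hDt, hτot⟩ := Set.mem_iUnion.mp hωU
          have : ω ∈ A ∩ {ω' | τ ω' = (t : ℝ)} := by
            by_contra hA'
            exact hsd t (Set.mem_symmDiff.mpr (Or.inr ⟨hDt, hA'⟩))
          exact hωn this.1
    · -- (b-ii)
      intro Λ hΛ
      refine ⟨⋃ t : ↥(Set.range τ),
        (Λ ∩ {ω | τo ω = (t : ℝ)} ∩ {ω | τ ω = (t : ℝ)}), ?_, ?_⟩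
      · refine (hτ.measurableSet _).2 ⟨?_, fun s => ?_⟩
        · exact MeasurableSet.iUnion fun t =>
            (le_iSup (FhatFilt T d 𝔓 hB hN) T _ (rawSA_le_FhatSA T d 𝔓 le_rfl _
              ((hτo.measurableSpace_le _ hΛ).inter ((rawFilt T d).le (t : ℝ) _
                (by have hx := hτo.measurableSet_eq (t : ℝ); simp only [WithTop.coe_eq_coe] at hx; exact hx))))).inter
            (le_iSup (FhatFilt T d 𝔓 hB hN) (t : ℝ) _
              (by have hx := hτ.measurableSet_eq (t : ℝ); simp only [WithTop.coe_eq_coe] at hx; exact hx))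
        simp only [WithTop.coe_le_coe]
        have heq : (⋃ t : ↥(Set.range τ),
              (Λ ∩ {ω | τo ω = (t : ℝ)} ∩ {ω | τ ω = (t : ℝ)})) ∩ {ω | τ ω ≤ s}
            = ⋃ (t : ↥(Set.range τ)) (_ : (t : ℝ) ≤ s),
              (Λ ∩ {ω | τo ω = (t : ℝ)} ∩ {ω | τ ω = (t : ℝ)}) := by
          ext ω
          simp only [Set.mem_inter_iff, Set.mem_iUnion, Set.mem_setOf_eq]
          constructor
          · rintro ⟨⟨t, h1, h2⟩, hle⟩; exact ⟨t, h2 ▸ hle, h1, h2⟩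
          · rintro ⟨t, hts, h1, h2⟩; exact ⟨⟨t, h1, h2⟩, h2 ▸ hts⟩
        rw [heq]
        refine MeasurableSet.iUnion fun t => MeasurableSet.iUnion fun hts => ?_
        have h1 : MeasurableSet[FhatSA T d 𝔓 (t : ℝ)] (Λ ∩ {ω | τo ω = (t : ℝ)}) := by
          have hset : Λ ∩ {ω | τo ω = (t : ℝ)}
              = (Λ ∩ {ω | τo ω ≤ (t : ℝ)}) \ {ω | τo ω < (t : ℝ)} := by
            ext ω
            simp only [Set.mem_inter_iff, Set.mem_setOf_eq, Set.mem_diff, not_lt]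
            constructor
            · rintro ⟨hΛω, he⟩; exact ⟨⟨hΛω, he.le⟩, he.ge⟩
            · rintro ⟨⟨hΛω, hle⟩, hge⟩; exact ⟨hΛω, le_antisymm hle hge⟩
          rw [hset]
          refine rawSA_le_FhatSA T d 𝔓 (hmemV t).2 _ ?_
          refine MeasurableSet.diff ?_ ?_
          · exact rawSA_mono (min_le_left _ _) _ (by have hx := hΛ.2 (t : ℝ); simp only [WithTop.coe_le_coe] at hx; exact hx)
          · exact rawSA_mono (min_le_left _ _) _ (by have hx := hτo.measurableSet_lt (t : ℝ); simp only [WithTop.coe_lt_coe] at hx; exact hx)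
        exact FhatSA_mono T d 𝔓 hts _ (h1.inter (by have hx := hτ.measurableSet_eq (t : ℝ); simp only [WithTop.coe_eq_coe] at hx; exact hx))
      · refine measure_mono_null ?_ hnull
        intro ω hω
        rcases Set.mem_symmDiff.mp hω with ⟨hωΛ, hωn⟩ | ⟨hωU, hωn⟩
        · intro hτeq
          exact hωn (Set.mem_iUnion.mpr
            ⟨⟨τ ω, Set.mem_range_self ω⟩, ⟨hωΛ, hτeq.symm⟩, rfl⟩)
        · obtain ⟨t, ⟨h1, _⟩, _⟩ := Set.mem_iUnion.mp hωU
          exact absurd h1 hωn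
end

section
/- Let τ be an F̂-stopping time. Then: (a) there exists an F⁺-stopping time τ⁺ such that the set {τ ≠ τ⁺} is 𝒫-polar; (b) for every F⁺-stopping time τ⁺ with {τ ≠ τ⁺} 𝒫-polar, the σ-algebras F̂_τ and F⁺_{τ⁺} differ only by 𝒫-polar sets, i.e., for every A ∈ F̂_τ there exists A⁺ ∈ F⁺_{τ⁺} with A △ A⁺ 𝒫-polar, and for every Λ ∈ F⁺_{τ⁺} there exists Λ' ∈ F̂_τ with Λ △ Λ' 𝒫-polar. -/
open MeasureTheory Set Filter

/-- The filtration `F⁺` as a filtration with ambient σ-algebra `F°_T`. -/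
def FplusFilt (T : ℝ) (d : ℕ) : Filtration ℝ (rawSA d T) where
  seq t := FplusSA T d t
  mono' := FplusSA_mono T d
  le' := FplusSA_le T d

open scoped symmDiff

section MyAux

variable {α : Type*} {m0 : MeasurableSpace α} {𝔓 : Set (@Measure α m0)}

lemma myIsPolar_mono {N M : Set α} (h : N ⊆ M) (hM : IsPolar 𝔓 M) : IsPolar 𝔓 N :=
  fun P hP => measure_mono_null h (hM P hP)

lemma myIsPolar_empty : IsPolar 𝔓 (∅ : Set α) := fun P _ => measure_empty

lemma myIsPolar_iUnion {ι : Sort*} [Countable ι] {s : ι → Set α}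
    (h : ∀ i, IsPolar 𝔓 (s i)) : IsPolar 𝔓 (⋃ i, s i) :=
  fun P hP => measure_iUnion_null fun i => h i P hP

lemma mySymmDiff_iUnion {ι : Sort*} {s t : ι → Set α} :
    ((⋃ i, s i) ∆ (⋃ i, t i)) ⊆ ⋃ i, (s i ∆ t i) := by
  intro x hx
  rw [Set.mem_symmDiff] at hx
  rcases hx with ⟨hs, ht⟩ | ⟨ht, hs⟩ <;>
    [ (obtain ⟨i, hi⟩ := Set.mem_iUnion.mp hs);
      (obtain ⟨i, hi⟩ := Set.mem_iUnion.mp ht) ] <;>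
  · refine Set.mem_iUnion.mpr ⟨i, ?_⟩
    rw [Set.mem_symmDiff]
    first
    | exact Or.inl ⟨hi, fun h => ht (Set.mem_iUnion.mpr ⟨i, h⟩)⟩
    | exact Or.inr ⟨hi, fun h => hs (Set.mem_iUnion.mpr ⟨i, h⟩)⟩

end MyAux

section MyAux2

variable {T : ℝ} {d : ℕ} {m0 : MeasurableSpace (PathSpace d)}
  {𝔓 : Set (@Measure (PathSpace d) m0)}

/-- Every `F̂ₜ`-measurable set agrees with an `F⁺ₜ`-measurable set up to a polar set. -/
lemma myFhat_approx {t : ℝ} {A : Set (PathSpace d)}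
    (hA : MeasurableSet[FhatSA T d 𝔓 t] A) :
    ∃ A', MeasurableSet[FplusSA T d t] A' ∧ IsPolar 𝔓 (A ∆ A') := by
  let m : MeasurableSpace (PathSpace d) :=
  { MeasurableSet' := fun A => ∃ A', MeasurableSet[FplusSA T d t] A' ∧ IsPolar 𝔓 (A ∆ A')
    measurableSet_empty := ⟨∅, @MeasurableSet.empty _ (FplusSA T d t), by
      simpa [symmDiff_self] using (myIsPolar_empty (𝔓 := 𝔓))⟩
    measurableSet_compl := by
      rintro A ⟨A', hA', hpol⟩
      exact ⟨A'ᶜ, hA'.compl, by rwa [compl_symmDiff_compl]⟩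
    measurableSet_iUnion := by
      intro f hf
      choose g hg hgp using hf
      exact ⟨⋃ i, g i, @MeasurableSet.iUnion _ _ (FplusSA T d t) _ _ hg,
        myIsPolar_mono mySymmDiff_iUnion (myIsPolar_iUnion hgp)⟩ }
  have hle : FhatSA T d 𝔓 t ≤ m := by
    refine sup_le ?_ ?_
    · intro A hA
      exact ⟨A, hA, by simpa [symmDiff_self] using (myIsPolar_empty (𝔓 := 𝔓))⟩
    · refine MeasurableSpace.generateFrom_le ?_
      intro N hN
      refine ⟨∅, @MeasurableSet.empty _ (FplusSA T d t), ?_⟩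
      rw [show (∅ : Set (PathSpace d)) = (⊥ : Set (PathSpace d)) from rfl, symmDiff_bot]
      exact hN
  exact hle A hA

/-- `F̂ₜ` is stable under modification on polar sets. -/
lemma myFhat_of_polar_diff {t : ℝ} {A A' : Set (PathSpace d)}
    (hA : MeasurableSet[FhatSA T d 𝔓 t] A) (h : IsPolar 𝔓 (A ∆ A')) :
    MeasurableSet[FhatSA T d 𝔓 t] A' := by
  have hpolar : ∀ N : Set (PathSpace d), IsPolar 𝔓 N → MeasurableSet[FhatSA T d 𝔓 t] N :=
    fun N hN =>
      (le_sup_right : MeasurableSpace.generateFrom {N | IsPolar 𝔓 N} ≤ FhatSA T d 𝔓 t)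
        N (MeasurableSpace.measurableSet_generateFrom hN)
  have h1 : IsPolar 𝔓 (A' \ A) :=
    myIsPolar_mono (fun x hx => by
      rw [Set.mem_symmDiff]; exact Or.inr ⟨hx.1, hx.2⟩) h
  have h2 : IsPolar 𝔓 (A \ A') :=
    myIsPolar_mono (fun x hx => by
      rw [Set.mem_symmDiff]; exact Or.inl ⟨hx.1, hx.2⟩) h
  have hid : A' = (A ∪ (A' \ A)) \ (A \ A') := by
    ext x
    by_cases hxA : x ∈ A <;> by_cases hxA' : x ∈ A' <;>
      simp [hxA, hxA', Set.mem_diff, Set.mem_union]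
  rw [hid]
  exact (hA.union (hpolar _ h1)).diff (hpolar _ h2)

lemma myMeasurableSet_FplusSA {t : ℝ} {X : Set (PathSpace d)} :
    MeasurableSet[FplusSA T d t] X ↔ ∀ s > t, MeasurableSet[rawSA d (min s T)] X := by
  unfold FplusSA
  constructor
  · intro h s hs
    have h1 := MeasurableSpace.measurableSet_iInf.mp h s
    exact MeasurableSpace.measurableSet_iInf.mp h1 hs
  · intro h
    rw [MeasurableSpace.measurableSet_iInf]
    intro s
    rw [MeasurableSpace.measurableSet_iInf]
    exact fun hs => h s hs

lemma myFplusSA_le_raw {t s : ℝ} (h : t < s) :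
    FplusSA T d t ≤ rawSA d (min s T) :=
  iInf₂_le (f := fun (u : ℝ) (_ : u ∈ Set.Ioi t) => rawSA d (min u T)) s h

/-- The main construction: every bounded `F̂`-stopping time agrees with an
`F⁺`-stopping time up to a polar set. -/
lemma myExists_fplus_st (hB : rawSA d T ≤ m0)
    (hN : MeasurableSpace.generateFrom {N | IsPolar 𝔓 N} ≤ m0)
    (C : ℝ) (hC : 0 ≤ C)
    (ρ : PathSpace d → ℝ) (hρ : IsStoppingTime (FhatFilt T d 𝔓 hB hN) (fun ω => (ρ ω : WithTop ℝ)))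
    (hmem : ∀ ω, ρ ω ∈ Set.Icc (0 : ℝ) C) :
    ∃ σ : PathSpace d → ℝ, IsStoppingTime (FplusFilt T d) (fun ω => (σ ω : WithTop ℝ)) ∧
      (∀ ω, σ ω ∈ Set.Icc (0 : ℝ) C) ∧ IsPolar 𝔓 {ω | ρ ω ≠ σ ω} := by
  have hρq : ∀ q : ℚ, MeasurableSet[FhatSA T d 𝔓 (q : ℝ)] {ω | ρ ω ≤ (q : ℝ)} :=
    fun q => by have h := hρ (q : ℝ); simp only [WithTop.coe_le_coe] at h; exact h
  choose A hAmeas hApol using fun q : ℚ => myFhat_approx (hρq q)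
  set B : ℚ → Set (PathSpace d) := fun q =>
    if C ≤ (q : ℝ) then Set.univ else if (q : ℝ) < 0 then ∅ else A q with hBdef
  have hBmeas : ∀ q : ℚ, MeasurableSet[FplusSA T d (q : ℝ)] (B q) := by
    intro q
    simp only [hBdef]
    split_ifs
    · exact @MeasurableSet.univ _ (FplusSA T d (q : ℝ))
    · exact @MeasurableSet.empty _ (FplusSA T d (q : ℝ))
    · exact hAmeas q
  have hBpol : ∀ q : ℚ, IsPolar 𝔓 ({ω | ρ ω ≤ (q : ℝ)} ∆ B q) := by
    intro q
    simp only [hBdef]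
    split_ifs with h1 h2
    · have : {ω : PathSpace d | ρ ω ≤ (q : ℝ)} = Set.univ :=
        Set.eq_univ_of_forall fun ω => le_trans (hmem ω).2 h1
      rw [this, symmDiff_self]
      simpa using (myIsPolar_empty (𝔓 := 𝔓))
    · have : {ω : PathSpace d | ρ ω ≤ (q : ℝ)} = ∅ := by
        ext ω
        simp only [Set.mem_setOf_eq, Set.mem_empty_iff_false, iff_false, not_le]
        exact lt_of_lt_of_le h2 (hmem ω).1
      rw [this, symmDiff_self]
      simpa using (myIsPolar_empty (𝔓 := 𝔓))
    · exact hApol q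
  set S : PathSpace d → Set ℝ := fun ω => (fun q : ℚ => (q : ℝ)) '' {q : ℚ | ω ∈ B q}
    with hSdef
  have hSne : ∀ ω, (S ω).Nonempty := by
    intro ω
    obtain ⟨q, hq⟩ := exists_rat_gt C
    refine ⟨(q : ℝ), ⟨q, ?_, rfl⟩⟩
    simp only [Set.mem_setOf_eq, hBdef]
    rw [if_pos hq.le]
    exact Set.mem_univ ω
  have hSbdd : ∀ ω, ∀ x ∈ S ω, (0 : ℝ) ≤ x := by
    rintro ω x ⟨q, hq, rfl⟩
    simp only [Set.mem_setOf_eq, hBdef] at hq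
    split_ifs at hq with h1 h2
    · exact le_trans hC h1
    · exact absurd hq (Set.notMem_empty ω)
    · exact not_lt.mp h2
  have hSbddBelow : ∀ ω, BddBelow (S ω) := fun ω => ⟨0, fun x hx => hSbdd ω x hx⟩
  set σ : PathSpace d → ℝ := fun ω => sInf (S ω) with hσdef
  have hσmem : ∀ ω, σ ω ∈ Set.Icc (0 : ℝ) C := by
    intro ω
    constructor
    · exact le_csInf (hSne ω) (hSbdd ω)
    · refine le_of_forall_pos_le_add fun ε hε => ?_
      obtain ⟨q, hq1, hq2⟩ := exists_rat_btwn (lt_add_of_pos_right C hε)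
      have hqS : (q : ℝ) ∈ S ω := by
        refine ⟨q, ?_, rfl⟩
        simp only [Set.mem_setOf_eq, hBdef]
        rw [if_pos hq1.le]
        exact Set.mem_univ ω
      exact le_trans (csInf_le (hSbddBelow ω) hqS) hq2.le
  have hσlt : ∀ (t : ℝ) (ω), σ ω < t ↔ ∃ q : ℚ, (q : ℝ) < t ∧ ω ∈ B q := by
    intro t ω
    rw [hσdef]
    simp only
    rw [csInf_lt_iff (hSbddBelow ω) (hSne ω)]
    constructor
    · rintro ⟨x, ⟨q, hq, rfl⟩, hxt⟩
      exact ⟨q, hxt, hq⟩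
    · rintro ⟨q, hqt, hq⟩
      exact ⟨(q : ℝ), ⟨q, hq, rfl⟩, hqt⟩
  -- The polar exceptional set
  set N : Set (PathSpace d) := ⋃ q : ℚ, ({ω | ρ ω ≤ (q : ℝ)} ∆ B q) with hNdef
  have hNpol : IsPolar 𝔓 N := myIsPolar_iUnion hBpol
  have hiff : ∀ ω ∉ N, ∀ q : ℚ, (ρ ω ≤ (q : ℝ) ↔ ω ∈ B q) := by
    intro ω hω q
    have : ω ∉ ({ω | ρ ω ≤ (q : ℝ)} ∆ B q) := fun h => hω (Set.mem_iUnion.mpr ⟨q, h⟩)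
    rw [Set.mem_symmDiff] at this
    push_neg at this
    exact ⟨fun h => this.1 h, fun h => this.2 h⟩
  have hagree : ∀ ω ∉ N, ρ ω = σ ω := by
    intro ω hω
    have hle1 : ρ ω ≤ σ ω := by
      refine le_csInf (hSne ω) ?_
      rintro x ⟨q, hq, rfl⟩
      exact (hiff ω hω q).mpr hq
    have hle2 : σ ω ≤ ρ ω := by
      refine le_of_forall_pos_le_add fun ε hε => ?_
      obtain ⟨q, hq1, hq2⟩ := exists_rat_btwn (lt_add_of_pos_right (ρ ω) hε)
      have hqS : (q : ℝ) ∈ S ω := ⟨q, (hiff ω hω q).mp hq1.le, rfl⟩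
      exact le_trans (csInf_le (hSbddBelow ω) hqS) hq2.le
    exact le_antisymm hle1 hle2
  refine ⟨σ, ?_, hσmem, myIsPolar_mono (fun ω hω => ?_) hNpol⟩
  · -- σ is an F⁺-stopping time
    intro t
    simp only [WithTop.coe_le_coe]
    show MeasurableSet[FplusSA T d t] {ω | σ ω ≤ t}
    rw [myMeasurableSet_FplusSA]
    intro s hs
    have hltmeas : ∀ u ≤ s, MeasurableSet[rawSA d (min s T)] {ω | σ ω < u} := by
      intro u hu
      have : {ω | σ ω < u} = ⋃ (q : ℚ) (_ : (q : ℝ) < u), B q := by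
        ext ω
        simp only [Set.mem_setOf_eq, Set.mem_iUnion]
        rw [hσlt u ω]
        exact ⟨fun ⟨q, h1, h2⟩ => ⟨q, h1, h2⟩, fun ⟨q, h1, h2⟩ => ⟨q, h1, h2⟩⟩
      rw [this]
      refine MeasurableSet.iUnion fun q => MeasurableSet.iUnion fun hq => ?_
      exact myFplusSA_le_raw (lt_of_lt_of_le hq hu) (B q) (hBmeas q)
    have hts : {ω | σ ω ≤ t} = ⋂ (q : ℚ) (_ : (q : ℝ) ∈ Set.Ioo t s), {ω | σ ω < (q : ℝ)} := by
      ext ω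
      simp only [Set.mem_setOf_eq, Set.mem_iInter]
      constructor
      · intro h q hq
        exact lt_of_le_of_lt h hq.1
      · intro h
        by_contra hc
        push_neg at hc
        obtain ⟨q, hq1, hq2⟩ := exists_rat_btwn (lt_min hs hc)
        have := h q ⟨hq1, lt_of_lt_of_le hq2 (min_le_left _ _)⟩
        exact absurd this (not_lt.mpr (le_of_lt (lt_of_lt_of_le hq2 (min_le_right _ _))))
    rw [hts]
    exact MeasurableSet.iInter fun q => MeasurableSet.iInter fun hq =>
      hltmeas (q : ℝ) hq.2.le
  · -- {ρ ≠ σ} ⊆ N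
    simp only [Set.mem_setOf_eq] at hω
    by_contra hωN
    exact hω (hagree ω hωN)

end MyAux2

/-- any `F̂`-stopping time agrees with an `F⁺`-stopping time up to a
`𝔓`-polar set, and the corresponding stopping σ-algebras differ only by `𝔓`-polar sets. -/
theorem statement4 {T : ℝ} (hT : 0 < T) {d : ℕ}
    {m0 : MeasurableSpace (PathSpace d)}
    (𝔓 : Set (@Measure (PathSpace d) m0)) (h𝔓 : 𝔓.Nonempty)
    (hprob : ∀ P ∈ 𝔓, IsProbabilityMeasure P)
    (hB : rawSA d T ≤ m0)
    (hN : MeasurableSpace.generateFrom {N | IsPolar 𝔓 N} ≤ m0)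
    (τ : PathSpace d → ℝ) (hτ : IsStoppingTime (FhatFilt T d 𝔓 hB hN) (fun ω => (τ ω : WithTop ℝ)))
    (hτmem : ∀ ω, τ ω ∈ Set.Icc (0 : ℝ) T) :
    -- (a) existence of an `F⁺`-stopping time agreeing with `τ` up to a polar set
    (∃ τp : PathSpace d → ℝ, IsStoppingTime (FplusFilt T d) (fun ω => (τp ω : WithTop ℝ)) ∧
      (∀ ω, τp ω ∈ Set.Icc (0 : ℝ) T) ∧ IsPolar 𝔓 {ω | τ ω ≠ τp ω}) ∧
    -- (b) for any such `τ⁺`, `F̂_τ` and `F⁺_{τ⁺}` differ only by polar sets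
    (∀ τp : PathSpace d → ℝ, ∀ hτp : IsStoppingTime (FplusFilt T d) (fun ω => (τp ω : WithTop ℝ)),
      IsPolar 𝔓 {ω | τ ω ≠ τp ω} →
      (∀ A : Set (PathSpace d), MeasurableSet[hτ.measurableSpace] A →
        ∃ Ap : Set (PathSpace d), MeasurableSet[hτp.measurableSpace] Ap ∧
          IsPolar 𝔓 (symmDiff A Ap)) ∧
      (∀ Λ : Set (PathSpace d), MeasurableSet[hτp.measurableSpace] Λ →
        ∃ Λ' : Set (PathSpace d), MeasurableSet[hτ.measurableSpace] Λ' ∧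
          IsPolar 𝔓 (symmDiff Λ Λ'))) := by
  classical
  constructor
  · -- (a)
    exact myExists_fplus_st hB hN T hT.le τ hτ hτmem
  · -- (b)
    intro τp hτp hpol
    constructor
    · -- F̂_τ ⊆ F⁺_{τ⁺} up to polar sets
      intro A hA
      -- the stopping time τ_A
      set τA : PathSpace d → ℝ := fun ω => if ω ∈ A then τ ω else T + 1 with hτAdef
      have hτA : IsStoppingTime (FhatFilt T d 𝔓 hB hN) (fun ω => (τA ω : WithTop ℝ)) := by
        intro t
        simp only [WithTop.coe_le_coe]
        rcases le_or_gt (T + 1) t with ht | ht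
        · have : {ω | τA ω ≤ t} = Set.univ := by
            refine Set.eq_univ_of_forall fun ω => ?_
            simp only [Set.mem_setOf_eq, hτAdef]
            split_ifs
            · exact le_trans (hτmem ω).2 (by linarith)
            · exact ht
          rw [this]
          exact MeasurableSet.univ
        · have : {ω | τA ω ≤ t} = A ∩ {ω | τ ω ≤ t} := by
            ext ω
            simp only [Set.mem_setOf_eq, Set.mem_inter_iff, hτAdef]
            by_cases hωA : ω ∈ A
            · simp [hωA]
            · simp only [hωA, if_false, false_and, iff_false]
              exact not_le.mpr ht
          rw [this]
          exact by simpa only [WithTop.coe_le_coe] using ((hτ.measurableSet A).mp hA).2 t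
      have hτAmem : ∀ ω, τA ω ∈ Set.Icc (0 : ℝ) (T + 1) := by
        intro ω
        rw [hτAdef]
        simp only
        split_ifs
        · exact ⟨(hτmem ω).1, le_trans (hτmem ω).2 (by linarith)⟩
        · exact ⟨by linarith, le_refl _⟩
      obtain ⟨σA, hσA, hσAmem, hσApol⟩ :=
        myExists_fplus_st hB hN (T + 1) (by linarith) τA hτA hτAmem
      refine ⟨{ω | τp ω = σA ω}, by simpa only [WithTop.coe_inj] using hτp.measurableSet_eq_stopping_time hσA, ?_⟩
      refine myIsPolar_mono (M := {ω | τ ω ≠ τp ω} ∪ {ω | τA ω ≠ σA ω})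
        (fun ω hω => ?_) ?_
      · show ω ∈ {ω | τ ω ≠ τp ω} ∪ {ω | τA ω ≠ σA ω}
        by_contra hc
        simp only [Set.mem_union, Set.mem_setOf_eq, not_or, not_not] at hc
        obtain ⟨h1, h2⟩ := hc
        rw [Set.mem_symmDiff] at hω
        rcases hω with ⟨hωA, hωAp⟩ | ⟨hωAp, hωA⟩
        · refine hωAp ?_
          show τp ω = σA ω
          rw [← h2, hτAdef]
          simp only [hωA, if_true]
          exact h1.symm
        · refine hωA ?_
          by_contra hωA'
          have hτAω : τA ω = T + 1 := by rw [hτAdef]; simp [hωA']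
          have : τp ω = T + 1 := by rw [Set.mem_setOf_eq] at hωAp; rw [hωAp, ← h2, hτAω]
          have hle : τp ω ≤ T := h1 ▸ (hτmem ω).2
          linarith
      · intro P hP
        refine measure_union_null (hpol P hP) (hσApol P hP)
    · -- F⁺_{τ⁺} ⊆ F̂_τ (exactly, up to trivial polar difference)
      intro Λ hΛ
      refine ⟨Λ, ?_, by
        rw [symmDiff_self]
        simpa using (myIsPolar_empty (𝔓 := 𝔓))⟩
      refine ⟨(iSup_mono fun t => (le_sup_left : FplusSA T d t ≤ FhatSA T d 𝔓 t)) _ hΛ.1, fun t => ?_⟩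
      simp only [WithTop.coe_le_coe]
      show MeasurableSet[FhatSA T d 𝔓 t] (Λ ∩ {ω | τ ω ≤ t})
      have h1 : MeasurableSet[FplusSA T d t] (Λ ∩ {ω | τp ω ≤ t}) :=
        by have h := ((hτp.measurableSet Λ).mp hΛ).2 t; simp only [WithTop.coe_le_coe] at h; exact h
      have h2 : MeasurableSet[FhatSA T d 𝔓 t] (Λ ∩ {ω | τp ω ≤ t}) :=
        (le_sup_left : FplusSA T d t ≤ FhatSA T d 𝔓 t) _ h1
      refine myFhat_of_polar_diff h2 (myIsPolar_mono (fun ω hω => ?_) hpol)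
      rw [Set.mem_symmDiff] at hω
      show τ ω ≠ τp ω
      intro heq
      rcases hω with ⟨⟨hωΛ, hωp⟩, hω2⟩ | ⟨⟨hωΛ, hωτ⟩, hω2⟩
      · exact hω2 ⟨hωΛ, by rw [Set.mem_setOf_eq, heq]; exact hωp⟩
      · exact hω2 ⟨hωΛ, by rw [Set.mem_setOf_eq, ← heq]; exact hωτ⟩
end

section
/- Suppose Assumption A holds for X. Let σ be an F°-stopping time taking finitely many values and define E°_σ(X)(ω) := E°_{σ(ω)}(X)(ω). Then for every P ∈ 𝒫, the random variable E°_σ(X) is a P-essential supremum of the family {E^{P'}[X|F°_σ] : P' ∈ 𝒫(F°_σ,P)}. -/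
open MeasureTheory Set Filter

section AuxLemmas2


variable {α : Type*} {m0 : MeasurableSpace α}

lemma eqOnSA_trim {α : Type*} {m m0 : MeasurableSpace α} (hm : m ≤ m0) {P Q : @Measure α m0}
    (h : EqOnSA m P Q) : P.trim hm = Q.trim hm := by
  refine @Measure.ext _ m _ _ fun A hA => ?_
  rw [trim_measurableSet_eq hm hA, trim_measurableSet_eq hm hA]
  exact h A hA

lemma integral_eqOnSA {α : Type*} {m m0 : MeasurableSpace α} (hm : m ≤ m0) {P Q : @Measure α m0}
    (h : EqOnSA m P Q) {f : α → ℝ} (hf : StronglyMeasurable[m] f) :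
    ∫ x, f x ∂P = ∫ x, f x ∂Q := by
  have h1 := integral_trim hm hf (μ := P)
  have h2 := integral_trim hm hf (μ := Q)
  rw [h1, h2, eqOnSA_trim hm h]

lemma measure_zero_of_setIntegral_zero {μ : @Measure α m0} {A : Set α} (hA : MeasurableSet A)
    {f : α → ℝ} (hf : IntegrableOn f A μ) (hpos : ∀ x ∈ A, 0 < f x)
    (hzero : ∫ x in A, f x ∂μ = 0) : μ A = 0 := by
  have h1 : 0 ≤ᵐ[μ.restrict A] f :=
    (ae_restrict_iff' hA).2 (Filter.Eventually.of_forall fun x hx => (hpos x hx).le)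
  have h2 : f =ᵐ[μ.restrict A] 0 := (integral_eq_zero_iff_of_nonneg_ae h1 hf).1 hzero
  have h3 : ∀ᵐ x ∂μ.restrict A, x ∈ A := ae_restrict_mem hA
  have h4 : ∀ᵐ _x ∂μ.restrict A, False := by
    filter_upwards [h2, h3] with x hfx hxA
    exact absurd hfx (ne_of_gt (hpos x hxA))
  have h5 : μ.restrict A Set.univ = 0 := by
    have := ae_iff.1 h4
    simpa using this
  simpa [Measure.restrict_apply_univ] using h5

lemma measurable_indicator_of_trace {m1 m2 : MeasurableSpace α} {Λ : Set α}
    (hΛ2 : MeasurableSet[m2] Λ)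
    (h12 : ∀ A : Set α, MeasurableSet[m1] A → MeasurableSet[m2] (A ∩ Λ))
    {f : α → ℝ} (hf : Measurable[m1] f) : Measurable[m2] (Λ.indicator f) := by
  intro B hB
  classical
  by_cases h0 : (0 : ℝ) ∈ B
  · have hpre : Λ.indicator f ⁻¹' B = (f ⁻¹' B ∩ Λ) ∪ Λᶜ := by
      ext x
      by_cases hx : x ∈ Λ <;> simp [Set.indicator_apply, hx, h0]
    rw [hpre]
    exact (h12 _ (hf hB)).union hΛ2.compl
  · have hpre : Λ.indicator f ⁻¹' B = f ⁻¹' B ∩ Λ := by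
      ext x
      by_cases hx : x ∈ Λ <;> simp [Set.indicator_apply, hx, h0]
    rw [hpre]
    exact h12 _ (hf hB)

lemma condexp_le_condexp_on {α : Type*} {m1 m2 m0 : MeasurableSpace α}
    (hm1 : m1 ≤ m0) (hm2 : m2 ≤ m0)
    (μ ν : @Measure α m0) [IsFiniteMeasure μ] [IsFiniteMeasure ν]
    {Λ : Set α} (hΛ1 : MeasurableSet[m1] Λ) (hΛ2 : MeasurableSet[m2] Λ)
    (h12 : ∀ A : Set α, MeasurableSet[m1] A → MeasurableSet[m2] (A ∩ Λ))
    (h21 : ∀ A : Set α, MeasurableSet[m2] A → MeasurableSet[m1] (A ∩ Λ))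
    (hres : μ.restrict Λ = ν.restrict Λ)
    {X : α → ℝ} (hXμ : Integrable X μ) (hXν : Integrable X ν) :
    ∃ N : Set α, MeasurableSet[m1] N ∧ MeasurableSet[m2] N ∧ μ N = 0 ∧ ν N = 0 ∧
      ∀ x ∈ Λ, x ∉ N → condExp m1 μ X x ≤ condExp m2 ν X x := by
  set f := condExp m1 μ X with hfdef
  set g := condExp m2 ν X with hgdef
  have hfm : Measurable[m1] f := stronglyMeasurable_condExp.measurable
  have hgm : Measurable[m2] g := stronglyMeasurable_condExp.measurable
  have hindf2 : Measurable[m2] (Λ.indicator f) := measurable_indicator_of_trace hΛ2 h12 hfm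
  have hindg1 : Measurable[m1] (Λ.indicator g) := measurable_indicator_of_trace hΛ1 h21 hgm
  have hindf1 : Measurable[m1] (Λ.indicator f) := hfm.indicator hΛ1
  have hindg2 : Measurable[m2] (Λ.indicator g) := hgm.indicator hΛ2
  set A := Λ ∩ {x | Λ.indicator g x < Λ.indicator f x} with hAdef
  have hA1 : MeasurableSet[m1] A := hΛ1.inter (measurableSet_lt hindg1 hindf1)
  have hA2 : MeasurableSet[m2] A := hΛ2.inter (measurableSet_lt hindg2 hindf2)
  have hA0 : MeasurableSet[m0] A := hm1 _ hA1
  have hAΛ : A ⊆ Λ := Set.inter_subset_left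
  have hresA : μ.restrict A = ν.restrict A := by
    have e1 : μ.restrict A = (μ.restrict Λ).restrict A := by
      rw [Measure.restrict_restrict hA0, Set.inter_eq_self_of_subset_left hAΛ]
    have e2 : ν.restrict A = (ν.restrict Λ).restrict A := by
      rw [Measure.restrict_restrict hA0, Set.inter_eq_self_of_subset_left hAΛ]
    rw [e1, e2, hres]
  have hfpos : ∀ x ∈ A, 0 < f x - g x := by
    rintro x ⟨hxΛ, hx⟩
    rw [Set.mem_setOf_eq, Set.indicator_of_mem hxΛ, Set.indicator_of_mem hxΛ] at hx
    exact sub_pos.2 hx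
  have e1 : ∫ x in A, f x ∂μ = ∫ x in A, X x ∂μ := setIntegral_condExp hm1 hXμ hA1
  have e2 : ∫ x in A, g x ∂ν = ∫ x in A, X x ∂ν := setIntegral_condExp hm2 hXν hA2
  have eX : ∫ x in A, X x ∂μ = ∫ x in A, X x ∂ν := by rw [hresA]
  have ef : ∫ x in A, f x ∂μ = ∫ x in A, f x ∂ν := by rw [hresA]
  have hfintν : IntegrableOn f A ν := by
    have h := (integrable_condExp (f := X) (m := m1) (μ := μ)).integrableOn (s := A)
    rw [IntegrableOn, hresA] at h
    exact h
  have hgintν : IntegrableOn g A ν := integrable_condExp.integrableOn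
  have esub : ∫ x in A, (f x - g x) ∂ν = 0 := by
    rw [integral_sub hfintν hgintν, ← ef, e1, eX, ← e2]
    ring
  have hνA : ν A = 0 :=
    measure_zero_of_setIntegral_zero hA0 (hfintν.sub hgintν) hfpos esub
  have hμA : μ A = 0 := by
    have h := congrArg (fun m : Measure α => m Set.univ) hresA
    simpa [Measure.restrict_apply_univ, hνA] using h
  refine ⟨A, hA1, hA2, hμA, hνA, fun x hxΛ hxA => ?_⟩
  by_contra hlt
  push_neg at hlt
  exact hxA ⟨hxΛ, by
    rw [Set.mem_setOf_eq, Set.indicator_of_mem hxΛ, Set.indicator_of_mem hxΛ]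
    exact hlt⟩

lemma integrable_of_bddFun {μ : @Measure α m0} [IsFiniteMeasure μ] {f : α → ℝ}
    (hf : Measurable f) (hb : ∃ C : ℝ, ∀ x, |f x| ≤ C) : Integrable f μ := by
  obtain ⟨C, hC⟩ := hb
  exact ⟨hf.aestronglyMeasurable, HasFiniteIntegral.of_bounded (C := C)
    (Filter.Eventually.of_forall fun x => by simpa [Real.norm_eq_abs] using hC x)⟩

end AuxLemmas2

/-- under Assumption A, the raw sublinear expectation evaluated at a
finite-valued `F°`-stopping time `σ` is a `P`-essential supremum of the family
`{E^{P'}[X | F°_σ] : P' ∈ 𝔓(F°_σ, P)}`, for every `P ∈ 𝔓`. -/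
theorem statement5 {T : ℝ} (hT : 0 < T) {d : ℕ}
    (𝔓 : Set (@Measure (PathSpace d) (rawSA d T))) (h𝔓 : 𝔓.Nonempty)
    (hprob : ∀ P ∈ 𝔓, IsProbabilityMeasure P)
    -- Assumption A
    (X : PathSpace d → ℝ) (hX : MemL1 (rawSA d T) 𝔓 X)
    (hstable : StableUnderPasting T d 𝔓)
    (Eo : ℝ → PathSpace d → ℝ)
    (hEomeas : ∀ t ∈ Set.Icc (0 : ℝ) T, Measurable[rawSA d t] (Eo t))
    (hEoess : ∀ t ∈ Set.Icc (0 : ℝ) T, ∀ P ∈ 𝔓,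
      IsEssSupOf P (condExpFam 𝔓 (rawSA d t) P X) (Eo t))
    -- the stopping time
    (σ : PathSpace d → ℝ) (hσ : IsStoppingTime (rawFilt T d) (fun ω => (σ ω : WithTop ℝ)))
    (hσfin : (Set.range σ).Finite) (hσmem : ∀ ω, σ ω ∈ Set.Icc (0 : ℝ) T) :
    ∀ P ∈ 𝔓,
      IsEssSupOf P (condExpFam 𝔓 hσ.measurableSpace P X) (fun ω => Eo (σ ω) ω) := by
  intro P hP
  letI : MeasurableSpace (PathSpace d) := rawSA d T
  haveI hPprob : IsProbabilityMeasure P := hprob P hP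
  have hmσ : hσ.measurableSpace ≤ rawSA d T := hσ.measurableSpace_le
  have hrange : ∀ t ∈ Set.range σ, t ∈ Set.Icc (0:ℝ) T := by
    rintro t ⟨ω, rfl⟩; exact hσmem ω
  have hmt : ∀ t ∈ Set.range σ, rawSA d t ≤ rawSA d T :=
    fun t ht => rawSA_mono (hrange t ht).2
  have hfiltEq : ∀ t ∈ Set.range σ, rawFilt T d t = rawSA d t := by
    intro t ht
    show rawSA d (min t T) = rawSA d t
    rw [min_eq_left (hrange t ht).2]
  have hcnt : (Set.range σ).Countable := hσfin.countable
  have hcnt' : (Set.range (fun ω => (σ ω : WithTop ℝ))).Countable :=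
    (hcnt.image (fun t : ℝ => (t : WithTop ℝ))).mono
      (by rintro _ ⟨ω, rfl⟩; exact ⟨σ ω, ⟨ω, rfl⟩, rfl⟩)
  have hΛt : ∀ t ∈ Set.range σ, MeasurableSet[rawSA d t] {ω | σ ω = t} := by
    intro t ht
    have h := hσ.measurableSet_eq_of_countable_range hcnt' t
    simp only [WithTop.coe_inj] at h
    rwa [hfiltEq t ht] at h
  have hΛσ : ∀ t ∈ Set.range σ, MeasurableSet[hσ.measurableSpace] {ω | σ ω = t} :=
    fun t _ => by
      have h := hσ.measurableSet_eq_of_countable_range' hcnt' t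
      simpa only [WithTop.coe_inj] using h
  have htrace : ∀ t ∈ Set.range σ, ∀ A : Set (PathSpace d),
      (MeasurableSet[hσ.measurableSpace] (A ∩ {ω | σ ω = t}) ↔
        MeasurableSet[rawSA d t] (A ∩ {ω | σ ω = t})) := by
    intro t ht A
    have h := hσ.measurableSet_inter_eq_iff A t
    simp only [WithTop.coe_inj] at h
    rwa [hfiltEq t ht] at h
  have h12 : ∀ t ∈ Set.range σ, ∀ A : Set (PathSpace d),
      MeasurableSet[hσ.measurableSpace] A →
      MeasurableSet[rawSA d t] (A ∩ {ω | σ ω = t}) := by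
    intro t ht A hA
    exact (htrace t ht A).1 (hA.inter (hΛσ t ht))
  have h21 : ∀ t ∈ Set.range σ, ∀ A : Set (PathSpace d),
      MeasurableSet[rawSA d t] A →
      MeasurableSet[hσ.measurableSpace] (A ∩ {ω | σ ω = t}) := by
    intro t ht A hA
    exact (htrace t ht A).2 (hA.inter (hΛt t ht))
  constructor
  · -- upper bound: every member of the family is ≤ Eo(σ ·) P-a.e.
    rintro g ⟨Q, ⟨hQ𝔓, hQeq⟩, rfl⟩
    haveI : IsProbabilityMeasure Q := hprob Q hQ𝔓
    have hXQ : Integrable X Q := hX.2.1 Q hQ𝔓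
    have key : ∀ t ∈ Set.range σ, ∀ᵐ ω ∂P, σ ω = t →
        condExp hσ.measurableSpace Q X ω ≤ Eo (σ ω) ω := by
      intro t ht
      obtain ⟨N, hN1, hN2, hNQ, -, hNle⟩ :=
        condexp_le_condexp_on hmσ (hmt t ht) Q Q (hΛσ t ht) (hΛt t ht)
          (h12 t ht) (h21 t ht) rfl hXQ hXQ
      have hNP : P N = 0 := by rw [← hQeq N hN1]; exact hNQ
      have hesQ := (hEoess t (hrange t ht) Q hQ𝔓).1 (condExp (rawSA d t) Q X)
        ⟨Q, ⟨hQ𝔓, fun A _ => rfl⟩, rfl⟩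
      have hSQ : Q {x | ¬ condExp (rawSA d t) Q X x ≤ Eo t x} = 0 := ae_iff.1 hesQ
      have hSmt : MeasurableSet[rawSA d t]
          {x | ¬ condExp (rawSA d t) Q X x ≤ Eo t x} := by
        have h := measurableSet_lt (hEomeas t (hrange t ht))
          (stronglyMeasurable_condExp.measurable :
            Measurable[rawSA d t] (condExp (rawSA d t) Q X))
        have heq : {x | ¬ condExp (rawSA d t) Q X x ≤ Eo t x}
            = {x | Eo t x < condExp (rawSA d t) Q X x} := by
          ext x; simp [not_le]
        rw [heq]
        exact h
      have hSΛσ : MeasurableSet[hσ.measurableSpace]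
          ({x | ¬ condExp (rawSA d t) Q X x ≤ Eo t x} ∩ {ω | σ ω = t}) :=
        h21 t ht _ hSmt
      have hSP : P ({x | ¬ condExp (rawSA d t) Q X x ≤ Eo t x} ∩ {ω | σ ω = t}) = 0 := by
        rw [← hQeq _ hSΛσ]
        exact measure_mono_null Set.inter_subset_left hSQ
      filter_upwards [measure_eq_zero_iff_ae_notMem.1 hNP, measure_eq_zero_iff_ae_notMem.1 hSP]
        with ω hωN hωS hωt
      rw [hωt]
      have hle1 : condExp hσ.measurableSpace Q X ω ≤ condExp (rawSA d t) Q X ω :=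
        hNle ω hωt hωN
      have hle2 : condExp (rawSA d t) Q X ω ≤ Eo t ω := by
        by_contra hcon
        exact hωS ⟨hcon, hωt⟩
      exact hle1.trans hle2
    have hall := (ae_ball_iff hcnt).2 key
    filter_upwards [hall] with ω hω
    exact hω (σ ω) ⟨ω, rfl⟩ rfl
  · -- minimality
    intro Z hZ
    have claim : ∀ t ∈ Set.range σ, ∀ Q ∈ MSet 𝔓 (rawSA d t) P,
        ∀ᵐ ω ∂P, σ ω = t → condExp (rawSA d t) Q X ω ≤ Z ω := by
      intro t ht Q hQ
      obtain ⟨hQ𝔓, hQeq⟩ := hQ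
      haveI : IsProbabilityMeasure Q := hprob Q hQ𝔓
      have hXQ : Integrable X Q := hX.2.1 Q hQ𝔓
      have hΛm0 : MeasurableSet[rawSA d T] {ω | σ ω = t} := hmt t ht _ (hΛt t ht)
      set Pb : @Measure (PathSpace d) (rawSA d T) :=
        Q.restrict {ω | σ ω = t} + P.restrict {ω | σ ω = t}ᶜ with hPbdef
      have hτc : IsStoppingTime (rawFilt T d) (fun _ => t) := isStoppingTime_const _ t
      have hG' : hτc.measurableSpace = rawSA d t :=
        (IsStoppingTime.measurableSpace_const (rawFilt T d) t).trans (hfiltEq t ht)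
      have hmt' : rawSA d t ≤ rawSA d T := hmt t ht
      have hpaste : IsPastingOf (rawSA d T) hτc.measurableSpace P Q P Pb
          {ω | σ ω = t} := by
        intro h hmeas hbdd
        rw [hG']
        have hQint : Integrable h Q := integrable_of_bddFun hmeas hbdd
        have hPint : Integrable h P := integrable_of_bddFun hmeas hbdd
        have huSM : StronglyMeasurable[rawSA d t]
            ({ω | σ ω = t}.indicator (condExp (rawSA d t) Q h)) :=
          stronglyMeasurable_condExp.indicator (hΛt t ht)
        have huQ : Integrable ({ω | σ ω = t}.indicator (condExp (rawSA d t) Q h)) Q :=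
          integrable_condExp.indicator hΛm0
        have huP : Integrable ({ω | σ ω = t}.indicator (condExp (rawSA d t) Q h)) P := by
          refine integrable_of_integrable_trim hmt' ?_
          rw [← eqOnSA_trim hmt' hQeq]
          exact huQ.trim hmt' huSM
        have hvP : Integrable ({ω | σ ω = t}ᶜ.indicator (condExp (rawSA d t) P h)) P :=
          integrable_condExp.indicator hΛm0.compl
        have r1 : ∫ x in {ω | σ ω = t}, condExp (rawSA d t) Q h x ∂P
            = ∫ x in {ω | σ ω = t}, h x ∂Q := by
          calc ∫ x in {ω | σ ω = t}, condExp (rawSA d t) Q h x ∂P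
              = ∫ x, {ω | σ ω = t}.indicator (condExp (rawSA d t) Q h) x ∂P :=
                (integral_indicator hΛm0).symm
            _ = ∫ x, {ω | σ ω = t}.indicator (condExp (rawSA d t) Q h) x ∂Q :=
                (integral_eqOnSA hmt' hQeq huSM).symm
            _ = ∫ x in {ω | σ ω = t}, condExp (rawSA d t) Q h x ∂Q :=
                integral_indicator hΛm0
            _ = ∫ x in {ω | σ ω = t}, h x ∂Q := setIntegral_condExp hmt' hQint (hΛt t ht)
        have r2 : ∫ x in {ω | σ ω = t}ᶜ, condExp (rawSA d t) P h x ∂P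
            = ∫ x in {ω | σ ω = t}ᶜ, h x ∂P :=
          setIntegral_condExp hmt' hPint (hΛt t ht).compl
        rw [hPbdef, integral_add_measure hQint.restrict hPint.restrict,
          integral_add huP hvP, integral_indicator hΛm0, integral_indicator hΛm0.compl,
          r1, r2]
      have hPb𝔓 : Pb ∈ 𝔓 := by
        refine hstable P hP (fun _ => t) hτc ?_ (fun _ => hrange t ht) {ω | σ ω = t}
          ?_ Q ⟨hQ𝔓, ?_⟩ P ⟨hP, fun A _ => rfl⟩ Pb hpaste
        · exact (Set.finite_singleton t).subset (by rintro u ⟨ω, rfl⟩; exact rfl)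
        · rw [hG']; exact hΛt t ht
        · intro A hA
          rw [hG'] at hA
          exact hQeq A hA
      haveI hPbprob : IsProbabilityMeasure Pb := hprob Pb hPb𝔓
      have hXPb : Integrable X Pb := hX.2.1 Pb hPb𝔓
      have hPbσ : EqOnSA hσ.measurableSpace Pb P := by
        intro A hA
        have hAm0 : MeasurableSet[rawSA d T] A := hmσ A hA
        rw [hPbdef]
        show Q.restrict {ω | σ ω = t} A + P.restrict {ω | σ ω = t}ᶜ A = P A
        rw [Measure.restrict_apply hAm0, Measure.restrict_apply hAm0,
          hQeq _ (h12 t ht A hA), ← Set.diff_eq]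
        exact measure_inter_add_diff A hΛm0
      have hresΛ : Q.restrict {ω | σ ω = t} = Pb.restrict {ω | σ ω = t} := by
        rw [hPbdef, Measure.restrict_add, Measure.restrict_restrict hΛm0,
          Measure.restrict_restrict hΛm0, Set.inter_self, Set.inter_compl_self,
          Measure.restrict_empty, add_zero]
      obtain ⟨N, hN1, hN2, hNQ, hNPb, hNle⟩ :=
        condexp_le_condexp_on (hmt t ht) hmσ Q Pb (hΛt t ht) (hΛσ t ht)
          (h21 t ht) (h12 t ht) hresΛ hXQ hXPb
      have hNP : P N = 0 := by rw [← hQeq N hN1]; exact hNQ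
      have hZPb : condExp hσ.measurableSpace Pb X ≤ᵐ[P] Z := hZ _ ⟨Pb, ⟨hPb𝔓, hPbσ⟩, rfl⟩
      filter_upwards [measure_eq_zero_iff_ae_notMem.1 hNP, hZPb] with ω hωN hωZ hωt
      exact (hNle ω hωt hωN).trans hωZ
    have key2 : ∀ t ∈ Set.range σ, ∀ᵐ ω ∂P, σ ω = t → Eo t ω ≤ Z ω := by
      intro t ht
      classical
      set Zt : PathSpace d → ℝ := fun ω => if σ ω = t then Z ω else Eo t ω with hZt
      have hdom : ∀ f ∈ condExpFam 𝔓 (rawSA d t) P X, f ≤ᵐ[P] Zt := by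
        rintro f ⟨Q, hQ, rfl⟩
        have h1 := claim t ht Q hQ
        have h2 := (hEoess t (hrange t ht) P hP).1 (condExp (rawSA d t) Q X) ⟨Q, hQ, rfl⟩
        filter_upwards [h1, h2] with ω hω1 hω2
        by_cases hc : σ ω = t
        · simp only [hZt, hc, if_true]
          exact hω1 hc
        · simp only [hZt, hc, if_false]
          exact hω2
      have h3 := (hEoess t (hrange t ht) P hP).2 Zt hdom
      filter_upwards [h3] with ω hω hωt
      simpa [hZt, hωt] using hω
    have hall := (ae_ball_iff hcnt).2 key2
    filter_upwards [hall] with ω hω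
    exact hω (σ ω) ⟨ω, rfl⟩ rfl
end
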